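/- arXiv:2108.06467 — 3 statements merged into one kernel-verified Lean document; each statement's English description precedes it below -/
import Mathlib

section
/- Let ρ : ℝ → ℝ be strongly sigmoidal of order k with constants a, b, C > 0. Let ε ∈ (0,1), set δ = (ε/(2^{k+1}C))^{1/k} and B = max{1, (C/ε)^{1/a}}. Then the function P(x) = (δ/B)^k ρ(Bx/δ) satisfies |x_+^k − P(x)| ≤ ε for all x with |x| ≤ 1. -/
open MeasureTheory Filter
open scoped Classical ENNReal NNReal
/-- A continuous `ρ : ℝ → ℝ` is sigmoidal of order `k ≥ 1` (with constant `C`) if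
`ρ(x)/x^k → 0` as `x → -∞`, `ρ(x)/x^k → 1` as `x → +∞`, and `|ρ(x)| ≤ C(1+|x|)^k`. -/
def SigmoidalOfOrder (ρ : ℝ → ℝ) (k : ℕ) (C : ℝ) : Prop :=
  Continuous ρ ∧
    Filter.Tendsto (fun x : ℝ => ρ x / x ^ k) Filter.atBot (nhds 0) ∧
    Filter.Tendsto (fun x : ℝ => ρ x / x ^ k) Filter.atTop (nhds 1) ∧
    ∀ x : ℝ, |ρ x| ≤ C * (1 + |x|) ^ k

/-- `ρ` is strongly sigmoidal of order `k` with constants `a, b, C > 0`. -/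
def StronglySigmoidal (ρ : ℝ → ℝ) (k : ℕ) (a b C : ℝ) : Prop :=
  SigmoidalOfOrder ρ k C ∧ Differentiable ℝ ρ ∧
    (∀ x : ℝ, x < 0 → |ρ x / x ^ k| ≤ C * |x| ^ (-a)) ∧
    (∀ x : ℝ, 0 < x → |ρ x / x ^ k - 1| ≤ C * x ^ (-a)) ∧
    ∀ x : ℝ, |deriv ρ x| ≤ C * |x| ^ b
/-- The basic approximant of `x_+^k`: for strongly sigmoidal `ρ` of order
`k` with constants `a, b, C`, setting `δ = (ε/(2^{k+1}C))^{1/k}` and `B = max{1,(C/ε)^{1/a}}`,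
the function `P(x) = (δ/B)^k ρ(Bx/δ)` satisfies `|x_+^k - P(x)| ≤ ε` for `|x| ≤ 1`. -/
theorem basic_sigmoidal_approximant
    (ρ : ℝ → ℝ) (k : ℕ) (a b C : ℝ) (hk : 1 ≤ k)
    (ha : 0 < a) (hb : 0 < b) (hC : 0 < C)
    (hρ : StronglySigmoidal ρ k a b C)
    (ε : ℝ) (hε0 : 0 < ε) (hε1 : ε < 1) :
    ∀ x : ℝ, |x| ≤ 1 →
      |max x 0 ^ k -
        ((ε / (2 ^ (k + 1) * C)) ^ ((1 : ℝ) / k) / max 1 ((C / ε) ^ (1 / a))) ^ k *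
          ρ (max 1 ((C / ε) ^ (1 / a)) * x / (ε / (2 ^ (k + 1) * C)) ^ ((1 : ℝ) / k))| ≤
        ε := by
  obtain ⟨⟨hcont, -, -, hgrow⟩, -, hneg, hpos, -⟩ := hρ
  have hkR : (0:ℝ) < (k:ℝ) := by exact_mod_cast Nat.pos_of_ne_zero (by omega)
  -- Step 1 : C ≥ 1
  have hC1 : 1 ≤ C := by
    have key : ∀ t : ℝ, 1 ≤ t → 1 ≤ C * t ^ (-a) + C * ((1 + t) / t) ^ k := by
      intro t ht
      have ht0 : (0:ℝ) < t := by linarith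
      have htk : (0:ℝ) < t ^ k := pow_pos ht0 k
      have h1 := (abs_le.1 (hpos t ht0)).1
      have e1 : 1 - C * t ^ (-a) ≤ ρ t / t ^ k := by linarith
      have e2 : ρ t / t ^ k ≤ C * ((1 + t) / t) ^ k := by
        have h2 : ρ t ≤ C * (1 + t) ^ k := by
          have := (abs_le.1 (hgrow t)).2
          rwa [abs_of_pos ht0] at this
        rw [div_pow, ← mul_div_assoc]
        gcongr
      linarith
    have lim : Tendsto (fun t : ℝ => C * t ^ (-a) + C * ((1 + t) / t) ^ k)
        atTop (nhds (C * 0 + C * (0 + 1) ^ k)) := by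
      refine Tendsto.add (tendsto_const_nhds.mul (tendsto_rpow_neg_atTop ha))
        (tendsto_const_nhds.mul (Tendsto.pow ?_ k))
      have h0 : Tendsto (fun t : ℝ => 1 / t + 1) atTop (nhds (0 + 1)) := by
        exact (by simpa [one_div] using tendsto_inv_atTop_zero :
          Tendsto (fun t : ℝ => 1 / t) atTop (nhds 0)).add tendsto_const_nhds
      refine Tendsto.congr' ?_ h0
      filter_upwards [eventually_ne_atTop (0:ℝ)] with t ht
      field_simp
    have := ge_of_tendsto lim (eventually_atTop.2 ⟨1, key⟩)
    simpa using this
  intro x hx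
  set d : ℝ := (ε / (2 ^ (k + 1) * C)) ^ ((1 : ℝ) / k) with hddef
  set B : ℝ := max 1 ((C / ε) ^ (1 / a)) with hBdef
  have hq0 : 0 < ε / (2 ^ (k + 1) * C) := div_pos hε0 (by positivity)
  have hd0 : 0 < d := Real.rpow_pos_of_pos hq0 _
  have hdk : d ^ k = ε / (2 ^ (k + 1) * C) := by
    rw [hddef, ← Real.rpow_natCast ((ε / (2 ^ (k + 1) * C)) ^ ((1:ℝ)/k)) k,
      ← Real.rpow_mul hq0.le, one_div, inv_mul_cancel₀ hkR.ne', Real.rpow_one]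
  have h2k : (4:ℝ) ≤ 2 ^ (k+1) := by
    calc (4:ℝ) = 2 ^ 2 := by norm_num
    _ ≤ 2 ^ (k+1) := pow_le_pow_right₀ one_le_two (by omega)
  have hdk4 : d ^ k ≤ ε / 4 := by
    rw [hdk]
    apply div_le_div_of_nonneg_left hε0.le (by norm_num)
    nlinarith
  have hd1 : d ≤ 1 := by
    have : d ^ k ≤ 1 := by nlinarith
    exact (pow_le_one_iff_of_nonneg hd0.le (by omega)).1 this
  have hB1 : (1:ℝ) ≤ B := le_max_left _ _
  have hB0 : (0:ℝ) < B := lt_of_lt_of_le one_pos hB1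
  have hBa : C / ε ≤ B ^ a := by
    have h1 : (C / ε) ^ ((1:ℝ)/a) ≤ B := le_max_right _ _
    have h2 : ((C / ε) ^ ((1:ℝ)/a)) ^ a ≤ B ^ a :=
      Real.rpow_le_rpow (Real.rpow_nonneg (by positivity) _) h1 ha.le
    rwa [← Real.rpow_mul (by positivity), one_div, inv_mul_cancel₀ ha.ne', Real.rpow_one] at h2
  have hCBa : C * B ^ (-a) ≤ ε := by
    rw [Real.rpow_neg hB0.le]
    rw [div_le_iff₀ hε0] at hBa
    have hBapos : (0:ℝ) < B ^ a := Real.rpow_pos_of_pos hB0 a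
    rw [mul_inv_le_iff₀ hBapos]
    linarith [mul_comm ε (B ^ a)]
  clear_value d B
  set y : ℝ := B * x / d with hydef
  have hyabs : |y| = B * |x| / d := by
    rw [hydef, abs_div, abs_mul, abs_of_pos hB0, abs_of_pos hd0]
  -- growth bound useful in the small-|x| regime
  have small : |x| ≤ d → (d / B) ^ k * |ρ y| ≤ ε / 2 := by
    intro hxd
    have hyB : |y| ≤ B := by
      rw [hyabs, div_le_iff₀ hd0]
      calc B * |x| ≤ B * d := by nlinarith [abs_nonneg x]
      _ = B * d := rfl
    have hgy : |ρ y| ≤ C * (2 * B) ^ k := by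
      refine (hgrow y).trans ?_
      have : 1 + |y| ≤ 2 * B := by linarith
      exact mul_le_mul_of_nonneg_left (pow_le_pow_left₀ (by positivity) this k) hC.le
    calc (d / B) ^ k * |ρ y| ≤ (d / B) ^ k * (C * (2 * B) ^ k) := by
          exact mul_le_mul_of_nonneg_left hgy (by positivity)
    _ = C * (2 * d) ^ k := by
          rw [div_pow, mul_pow, mul_pow]
          field_simp
    _ = ε / 2 := by
          rw [mul_pow, hdk, pow_succ]
          field_simp
  rcases le_or_gt x 0 with hx0 | hx0
  · -- x ≤ 0
    rw [max_eq_right hx0, zero_pow (by omega : k ≠ 0), zero_sub, abs_neg, abs_mul,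
      abs_of_pos (by positivity : (0:ℝ) < (d / B) ^ k)]
    rcases le_or_gt |x| d with hxd | hxd
    · linarith [small hxd]
    · have hxneg : x < 0 := by
        rcases lt_or_eq_of_le hx0 with h | h
        · exact h
        · exfalso; rw [h] at hxd; simp at hxd; linarith
      have hyneg : y < 0 := by
        rw [hydef]
        exact div_neg_of_neg_of_pos (mul_neg_of_pos_of_neg hB0 hxneg) hd0
      have hyB : B ≤ |y| := by
        rw [hyabs, le_div_iff₀ hd0]
        nlinarith
      have hρy : |ρ y| ≤ C * |y| ^ (-a) * |y| ^ k := by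
        have h := hneg y hyneg
        have hyk : y ^ k ≠ 0 := pow_ne_zero k hyneg.ne
        have : |ρ y| = |ρ y / y ^ k| * |y ^ k| := by
          rw [← abs_mul, div_mul_cancel₀ _ hyk]
        rw [this, abs_pow]
        exact mul_le_mul_of_nonneg_right h (by positivity)
      calc (d / B) ^ k * |ρ y| ≤ (d / B) ^ k * (C * |y| ^ (-a) * |y| ^ k) :=
            mul_le_mul_of_nonneg_left hρy (by positivity)
      _ = C * |y| ^ (-a) * (d * |y| / B) ^ k := by
            field_simp
            ring
      _ = C * |y| ^ (-a) * |x| ^ k := by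
            rw [hyabs]
            congr 2
            field_simp
      _ ≤ C * B ^ (-a) * 1 := by
            have h1 : |y| ^ (-a) ≤ B ^ (-a) :=
              Real.rpow_le_rpow_of_nonpos hB0 hyB (by linarith)
            have h2 : |x| ^ k ≤ 1 := pow_le_one₀ (abs_nonneg x) hx
            have := Real.rpow_nonneg (abs_nonneg y) (-a)
            apply mul_le_mul (mul_le_mul_of_nonneg_left h1 hC.le) h2 (by positivity)
            positivity
      _ ≤ ε := by rw [mul_one]; exact hCBa
  · -- x > 0
    rw [max_eq_left hx0.le]
    rcases le_or_gt x d with hxd | hxd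
    · have h1 := small (by rwa [abs_of_pos hx0])
      have h2 : |x ^ k - (d / B) ^ k * ρ y| ≤ x ^ k + (d / B) ^ k * |ρ y| := by
        calc |x ^ k - (d / B) ^ k * ρ y| ≤ |x ^ k| + |(d / B) ^ k * ρ y| := abs_sub _ _
        _ = x ^ k + (d / B) ^ k * |ρ y| := by
              rw [abs_of_nonneg (by positivity : (0:ℝ) ≤ x ^ k), abs_mul,
                abs_of_pos (by positivity : (0:ℝ) < (d / B) ^ k)]
      have h3 : x ^ k ≤ ε / 4 := by
        calc x ^ k ≤ d ^ k := pow_le_pow_left₀ hx0.le hxd k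
        _ ≤ ε / 4 := hdk4
      linarith
    · have hy0 : 0 < y := by positivity
      have hyB : B ≤ y := by
        rw [hydef, le_div_iff₀ hd0]; nlinarith
      have hyx : y * (d / B) = x := by
        rw [hydef]; field_simp
      have hykne : y ^ k ≠ 0 := pow_ne_zero k hy0.ne'
      have hid : (d / B) ^ k * ρ y = x ^ k * (ρ y / y ^ k) := by
        rw [← hyx, mul_pow, mul_assoc, mul_comm ((d / B) ^ k) (ρ y / y ^ k),
          ← mul_assoc, mul_div_assoc', mul_div_cancel_left₀ _ hykne]
        exact mul_comm _ _
      rw [hid, show x ^ k - x ^ k * (ρ y / y ^ k) = -(x ^ k * (ρ y / y ^ k - 1)) by ring,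
        abs_neg, abs_mul, abs_of_nonneg (by positivity : (0:ℝ) ≤ x ^ k)]
      have h1 := hpos y hy0
      have h2 : y ^ (-a) ≤ B ^ (-a) :=
        Real.rpow_le_rpow_of_nonpos hB0 hyB (by linarith)
      have h3 : x ^ k ≤ 1 := pow_le_one₀ hx0.le ((le_abs_self x).trans hx)
      calc x ^ k * |ρ y / y ^ k - 1| ≤ 1 * (C * B ^ (-a)) := by
            apply mul_le_mul h3 (h1.trans (mul_le_mul_of_nonneg_left h2 hC.le))
              (abs_nonneg _) (by norm_num)
      _ ≤ ε := by rw [one_mul]; exact hCBa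
end

section
/- Let L ∈ ℕ, D > 0, and let ρ : ℝ → ℝ be strongly sigmoidal of order k with constants a, b, C > 0. Then there exist A > 0 and a positive integer n depending only on L, k, a, b, D such that for every ε ∈ (0,1) there is a neural network Φ ∈ NN_{L+1,2L+2,1,ρ} satisfying |x^{k^L} − Φ(x)| ≤ ε for all |x| ≤ D, with all weights of Φ bounded in absolute value by A·ε^{−n}. -/
open MeasureTheory Filter
open scoped Classical ENNReal NNReal

/-- A feed-forward neural network with input dimension `d` and exactly `L` layers
(affine maps `W_1, …, W_L`), output dimension `1`. -/
structure NeuralNet (d L : ℕ) where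
  width : ℕ → ℕ
  width_zero : width 0 = d
  width_last : width L = 1
  A : (ℓ : ℕ) → Matrix (Fin (width (ℓ + 1))) (Fin (width ℓ)) ℝ
  b : (ℓ : ℕ) → Fin (width (ℓ + 1)) → ℝ

namespace NeuralNet

variable {d L : ℕ}

/-- The activated value of the `ℓ`-th layer on input `x`. -/
noncomputable def hidden (Φ : NeuralNet d L) (ρ : ℝ → ℝ) (x : Fin d → ℝ) :
    (ℓ : ℕ) → Fin (Φ.width ℓ) → ℝ
  | 0 => fun i => x (Fin.cast Φ.width_zero i)
  | ℓ + 1 => fun i => ρ ((∑ j, Φ.A ℓ i j * Φ.hidden ρ x ℓ j) + Φ.b ℓ i)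

/-- The realization `Φ(x) = W_L (ρ (W_{L-1} (ρ (⋯ ρ(W_1 x)))))` of the network:
the final affine map is applied without activation. -/
noncomputable def realize (Φ : NeuralNet d L) (ρ : ℝ → ℝ) (x : Fin d → ℝ) : ℝ :=
  ∑ i : Fin (Φ.width (L - 1 + 1)),
    ((∑ j, Φ.A (L - 1) i j * Φ.hidden ρ x (L - 1) j) + Φ.b (L - 1) i)

/-- Connectivity: total number of nonzero entries of all matrices `A_ℓ` and vectors `b_ℓ`. -/
noncomputable def conn (Φ : NeuralNet d L) : ℕ :=
  ∑ ℓ ∈ Finset.range L,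
    ((Finset.univ.filter fun p : Fin (Φ.width (ℓ + 1)) × Fin (Φ.width ℓ) =>
        Φ.A ℓ p.1 p.2 ≠ 0).card +
      (Finset.univ.filter fun i : Fin (Φ.width (ℓ + 1)) => Φ.b ℓ i ≠ 0).card)

/-- All weights of the network are bounded in absolute value by `B`. -/
def weightsBdd (Φ : NeuralNet d L) (B : ℝ) : Prop :=
  ∀ ℓ < L, (∀ i j, |Φ.A ℓ i j| ≤ B) ∧ (∀ i, |Φ.b ℓ i| ≤ B)

/-- All weights of the network belong to the set `S`. -/
def weightsIn (Φ : NeuralNet d L) (S : Set ℝ) : Prop :=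
  ∀ ℓ < L, (∀ i j, Φ.A ℓ i j ∈ S) ∧ (∀ i, Φ.b ℓ i ∈ S)

end NeuralNet

/-- An activation function is acceptable if it is Lipschitz continuous, or differentiable
with derivative dominated by a polynomial. -/
def Acceptable (ρ : ℝ → ℝ) : Prop :=
  (∃ K : NNReal, LipschitzWith K ρ) ∨
    (Differentiable ℝ ρ ∧ ∃ q : Polynomial ℝ, ∀ x : ℝ, |deriv ρ x| ≤ |q.eval x|)

/-- The two-chain power network. -/
noncomputable def powerNet (L : ℕ) (lam w s : ℝ) : NeuralNet 1 (L + 1) where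
  width ℓ := if ℓ = 0 ∨ L + 1 ≤ ℓ then 1 else 2
  width_zero := by simp
  width_last := by simp
  A ℓ := Matrix.of fun i j =>
    if ℓ = 0 then (if (i : ℕ) = 0 then lam else -lam)
    else if ℓ = L then (if (j : ℕ) = 0 then w else s * w)
    else if (i : ℕ) = (j : ℕ) then 1 else 0
  b _ _ := 0

lemma powerNet_width_le (L : ℕ) (lam w s : ℝ) (ℓ : ℕ) :
    (powerNet L lam w s).width ℓ ≤ 2 := by
  simp only [powerNet]
  split_ifs <;> norm_num

lemma powerNet_width_eq_two {L ℓ : ℕ} (lam w s : ℝ) (h1 : 1 ≤ ℓ) (h2 : ℓ ≤ L) :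
    (powerNet L lam w s).width ℓ = 2 := by
  simp only [powerNet]
  rw [if_neg]
  omega

lemma powerNet_width_zero' (L : ℕ) (lam w s : ℝ) :
    (powerNet L lam w s).width 0 = 1 := by simp [powerNet]

lemma powerNet_width_last' (L : ℕ) (lam w s : ℝ) :
    (powerNet L lam w s).width (L+1) = 1 := by simp [powerNet]
lemma powerNet_hidden {L : ℕ} (hL : 1 ≤ L) (lam w s : ℝ) (ρ : ℝ → ℝ) (x : Fin 1 → ℝ) :
    ∀ ℓ, 1 ≤ ℓ → ℓ ≤ L → ∀ i : Fin ((powerNet L lam w s).width ℓ),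
      (powerNet L lam w s).hidden ρ x ℓ i
        = ρ^[ℓ] ((if (i : ℕ) = 0 then lam else -lam) * x 0) := by
  intro ℓ
  induction ℓ with
  | zero => omega
  | succ n ih =>
    intro _ hnL i
    simp only [NeuralNet.hidden]
    have hb : (powerNet L lam w s).b n i = 0 := rfl
    rw [hb, add_zero]
    rcases Nat.eq_zero_or_pos n with hn0 | hn1
    · subst hn0
      have hx0 : ∀ j : Fin ((powerNet L lam w s).width 0),
          (powerNet L lam w s).hidden ρ x 0 j = x 0 := by
        intro j
        simp only [NeuralNet.hidden]
        exact congrArg x (Subsingleton.elim _ _)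
      have hsum : (∑ j, (powerNet L lam w s).A 0 i j *
            (powerNet L lam w s).hidden ρ x 0 j)
          = (if (i : ℕ) = 0 then lam else -lam) * x 0 := by
        have : ∀ j : Fin ((powerNet L lam w s).width 0),
            (powerNet L lam w s).A 0 i j * (powerNet L lam w s).hidden ρ x 0 j
              = (if (i : ℕ) = 0 then lam else -lam) * x 0 := by
          intro j
          rw [hx0 j]
          congr 1
        rw [Finset.sum_congr rfl fun j _ => this j, Finset.sum_const, Finset.card_univ,
          Fintype.card_fin, powerNet_width_zero', one_smul]
      rw [hsum]
      rfl
    · -- n ≥ 1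
      have hn0 : n ≠ 0 := by omega
      have hnLlt : n ≠ L := by omega
      have hsum : (∑ j, (powerNet L lam w s).A n i j *
            (powerNet L lam w s).hidden ρ x n j)
          = ∑ jn ∈ Finset.range ((powerNet L lam w s).width n),
              (if (i : ℕ) = jn then (1:ℝ) else 0) *
                ρ^[n] ((if jn = 0 then lam else -lam) * x 0) := by
        rw [← Fin.sum_univ_eq_sum_range]
        refine Finset.sum_congr rfl fun j _ => ?_
        rw [ih hn1 (by omega) j]
        congr 1
        show (if n = 0 then (if (i : ℕ) = 0 then lam else -lam)
          else if n = L then (if (j : ℕ) = 0 then w else s * w)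
          else if (i : ℕ) = (j : ℕ) then 1 else 0) = _
        rw [if_neg hn0, if_neg hnLlt]
      rw [hsum, powerNet_width_eq_two lam w s hn1 (by omega),
        Finset.sum_range_succ, Finset.sum_range_one]
      have hi2 : (i : ℕ) < 2 := lt_of_lt_of_le i.isLt (powerNet_width_le L lam w s _)
      rcases (by omega : (i : ℕ) = 0 ∨ (i : ℕ) = 1) with h0 | h1
      · rw [h0]
        norm_num
        rw [← Function.iterate_succ_apply ρ n, Function.iterate_succ_apply' ρ n]
      · rw [h1]
        norm_num
        rw [← Function.iterate_succ_apply ρ n, Function.iterate_succ_apply' ρ n]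
lemma powerNet_realize {L : ℕ} (hL : 1 ≤ L) (lam w s : ℝ) (ρ : ℝ → ℝ) (x : Fin 1 → ℝ) :
    (powerNet L lam w s).realize ρ x
      = w * ρ^[L] (lam * x 0) + s * w * ρ^[L] (-lam * x 0) := by
  have hLL : L + 1 - 1 = L := by omega
  unfold NeuralNet.realize
  have hinner : ∀ i : Fin ((powerNet L lam w s).width (L + 1 - 1 + 1)),
      ((∑ j, (powerNet L lam w s).A (L + 1 - 1) i j *
          (powerNet L lam w s).hidden ρ x (L + 1 - 1) j)
        + (powerNet L lam w s).b (L + 1 - 1) i)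
      = w * ρ^[L] (lam * x 0) + s * w * ρ^[L] (-lam * x 0) := by
    intro i
    have hb : (powerNet L lam w s).b (L + 1 - 1) i = 0 := rfl
    rw [hb, add_zero]
    have hsum : (∑ j, (powerNet L lam w s).A (L + 1 - 1) i j *
          (powerNet L lam w s).hidden ρ x (L + 1 - 1) j)
        = ∑ jn ∈ Finset.range ((powerNet L lam w s).width (L + 1 - 1)),
            (if jn = 0 then w else s * w) *
              ρ^[L] ((if jn = 0 then lam else -lam) * x 0) := by
      rw [← Fin.sum_univ_eq_sum_range]
      refine Finset.sum_congr rfl fun j _ => ?_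
      have hhid : (powerNet L lam w s).hidden ρ x (L + 1 - 1) j
          = ρ^[L] ((if (j : ℕ) = 0 then lam else -lam) * x 0) := by
        have := powerNet_hidden hL lam w s ρ x (L + 1 - 1)
          (by omega) (by omega)
        simp only [hLL] at this ⊢
        exact this _
      rw [hhid]
      congr 1
      show (if L + 1 - 1 = 0 then (if (i : ℕ) = 0 then lam else -lam)
        else if L + 1 - 1 = L then (if (j : ℕ) = 0 then w else s * w)
        else if (i : ℕ) = (j : ℕ) then 1 else 0) = _
      rw [if_neg (by omega), if_pos hLL]
    rw [hsum]
    have hw2 : (powerNet L lam w s).width (L + 1 - 1) = 2 :=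
      powerNet_width_eq_two lam w s (by omega) (by omega)
    rw [hw2, Finset.sum_range_succ, Finset.sum_range_one]
    norm_num
  rw [Finset.sum_congr rfl fun i _ => hinner i, Finset.sum_const, Finset.card_univ,
    Fintype.card_fin]
  have h1 : (powerNet L lam w s).width (L + 1 - 1 + 1) = 1 := by
    rw [hLL]; exact powerNet_width_last' L lam w s
  rw [h1, one_smul]
lemma powerNet_conn_le {L : ℕ} (hL : 1 ≤ L) (lam w s : ℝ) :
    (powerNet L lam w s).conn ≤ 2 * L + 2 := by
  unfold NeuralNet.conn
  have hbound : ∀ ℓ ∈ Finset.range (L + 1),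
      ((Finset.univ.filter fun p : Fin ((powerNet L lam w s).width (ℓ + 1)) ×
            Fin ((powerNet L lam w s).width ℓ) =>
          (powerNet L lam w s).A ℓ p.1 p.2 ≠ 0).card +
        (Finset.univ.filter fun i : Fin ((powerNet L lam w s).width (ℓ + 1)) =>
          (powerNet L lam w s).b ℓ i ≠ 0).card) ≤ 2 := by
    intro ℓ hℓ
    have hbcard : (Finset.univ.filter fun i : Fin ((powerNet L lam w s).width (ℓ + 1)) =>
        (powerNet L lam w s).b ℓ i ≠ 0).card = 0 := by
      rw [Finset.card_eq_zero, Finset.filter_eq_empty_iff]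
      intro i _
      show ¬ (0 : ℝ) ≠ 0
      simp
    rw [hbcard, add_zero]
    have hcrude : (Finset.univ.filter fun p : Fin ((powerNet L lam w s).width (ℓ + 1)) ×
          Fin ((powerNet L lam w s).width ℓ) =>
        (powerNet L lam w s).A ℓ p.1 p.2 ≠ 0).card
        ≤ (powerNet L lam w s).width (ℓ + 1) * (powerNet L lam w s).width ℓ := by
      calc _ ≤ (Finset.univ :
            Finset (Fin ((powerNet L lam w s).width (ℓ + 1)) ×
              Fin ((powerNet L lam w s).width ℓ))).card := Finset.card_filter_le _ _
        _ = _ := by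
            rw [Finset.card_univ, Fintype.card_prod, Fintype.card_fin, Fintype.card_fin]
    by_cases h0 : ℓ = 0
    · refine le_trans hcrude ?_
      rw [h0, powerNet_width_eq_two lam w s le_rfl hL, powerNet_width_zero']
    · by_cases hLe : ℓ = L
      · refine le_trans hcrude ?_
        have e1 : (powerNet L lam w s).width (ℓ + 1) = 1 := by
          rw [hLe]; exact powerNet_width_last' L lam w s
        have e2 : (powerNet L lam w s).width ℓ = 2 :=
          powerNet_width_eq_two lam w s (by omega) (le_of_eq hLe)
        rw [e1, e2]
      · -- middle layer
        have hdiag : ∀ p : Fin ((powerNet L lam w s).width (ℓ + 1)) ×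
              Fin ((powerNet L lam w s).width ℓ),
            (powerNet L lam w s).A ℓ p.1 p.2 ≠ 0 → (p.1 : ℕ) = (p.2 : ℕ) := by
          intro p hp
          by_contra hne
          apply hp
          show (if ℓ = 0 then (if (p.1 : ℕ) = 0 then lam else -lam)
            else if ℓ = L then (if (p.2 : ℕ) = 0 then w else s * w)
            else if (p.1 : ℕ) = (p.2 : ℕ) then 1 else 0) = 0
          rw [if_neg h0, if_neg hLe, if_neg hne]
        calc (Finset.univ.filter fun p : Fin ((powerNet L lam w s).width (ℓ + 1)) ×
              Fin ((powerNet L lam w s).width ℓ) =>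
            (powerNet L lam w s).A ℓ p.1 p.2 ≠ 0).card
            ≤ (Finset.range 2).card := by
              refine Finset.card_le_card_of_injOn (fun p => (p.1 : ℕ)) ?_ ?_
              · intro p _
                exact Finset.mem_range.mpr
                  (lt_of_lt_of_le p.1.isLt (powerNet_width_le L lam w s _))
              · intro p hp q hq hpq
                simp only [Finset.coe_filter, Set.mem_setOf_eq] at hp hq
                have hpq' : (p.1 : ℕ) = (q.1 : ℕ) := hpq
                have h1 := hdiag p hp.2
                have h2 := hdiag q hq.2
                have : (p.2 : ℕ) = (q.2 : ℕ) := by omega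
                exact Prod.ext (Fin.ext hpq') (Fin.ext this)
          _ = 2 := Finset.card_range 2
  calc (∑ ℓ ∈ Finset.range (L + 1), _) ≤ ∑ _ℓ ∈ Finset.range (L + 1), 2 :=
        Finset.sum_le_sum hbound
    _ = 2 * L + 2 := by rw [Finset.sum_const, Finset.card_range, smul_eq_mul]; omega
lemma powerNet_weightsBdd {L : ℕ} (lam w s B : ℝ) (hlam : |lam| ≤ B) (h1 : 1 ≤ B)
    (hw : |w| ≤ B) (hsw : |s * w| ≤ B) :
    (powerNet L lam w s).weightsBdd B := by
  intro ℓ _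
  have h0B : (0 : ℝ) ≤ B := le_trans zero_le_one h1
  refine ⟨fun i j => ?_, fun i => ?_⟩
  · show |if ℓ = 0 then (if (i : ℕ) = 0 then lam else -lam)
      else if ℓ = L then (if (j : ℕ) = 0 then w else s * w)
      else if (i : ℕ) = (j : ℕ) then 1 else 0| ≤ B
    split_ifs
    · exact hlam
    · rwa [abs_neg]
    · exact hw
    · exact hsw
    · rwa [abs_one]
    · rwa [abs_zero]
  · show |(0 : ℝ)| ≤ B
    rwa [abs_zero]
lemma abs_pow_sub_pow_le' (n : ℕ) (R p q : ℝ) (hR : 1 ≤ R) (hp : |p| ≤ R) (hq : |q| ≤ R) :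
    |p ^ n - q ^ n| ≤ n * R ^ n * |p - q| := by
  induction n with
  | zero => simp
  | succ m ih =>
    have hRpos : (0 : ℝ) < R := lt_of_lt_of_le zero_lt_one hR
    have key : p ^ (m + 1) - q ^ (m + 1) = p ^ m * (p - q) + q * (p ^ m - q ^ m) := by ring
    have h1 : |p ^ m * (p - q)| ≤ R ^ m * |p - q| := by
      rw [abs_mul, abs_pow]
      exact mul_le_mul_of_nonneg_right (pow_le_pow_left₀ (abs_nonneg _) hp m) (abs_nonneg _)
    have h2 : |q * (p ^ m - q ^ m)| ≤ R * (m * R ^ m * |p - q|) := by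
      rw [abs_mul]
      exact mul_le_mul hq ih (abs_nonneg _) (le_of_lt hRpos)
    calc |p ^ (m + 1) - q ^ (m + 1)| ≤ |p ^ m * (p - q)| + |q * (p ^ m - q ^ m)| := by
          rw [key]; exact abs_add_le _ _
      _ ≤ R ^ m * |p - q| + R * (m * R ^ m * |p - q|) := add_le_add h1 h2
      _ = R ^ m * |p - q| + m * R ^ (m + 1) * |p - q| := by ring
      _ ≤ R ^ (m + 1) * |p - q| + m * R ^ (m + 1) * |p - q| := by
          have hRm : R ^ m ≤ R ^ (m + 1) := by
            calc R ^ m = R ^ m * 1 := by ring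
              _ ≤ R ^ m * R := by
                  exact mul_le_mul_of_nonneg_left hR (le_of_lt (pow_pos hRpos m))
              _ = R ^ (m + 1) := by ring
          exact add_le_add (mul_le_mul_of_nonneg_right hRm (abs_nonneg _)) le_rfl
      _ = (↑(m + 1) : ℝ) * R ^ (m + 1) * |p - q| := by push_cast; ring

lemma pow_eq_max_add (N : ℕ) (hN : 1 ≤ N) (x : ℝ) :
    x ^ N = (max x 0) ^ N + (-1 : ℝ) ^ N * (max (-x) 0) ^ N := by
  rcases le_total 0 x with hx | hx
  · rw [max_eq_left hx, max_eq_right (by linarith : -x ≤ 0), zero_pow (by omega)]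
    ring
  · rw [max_eq_right hx, max_eq_left (by linarith : (0:ℝ) ≤ -x), zero_pow (by omega)]
    rw [← mul_pow]
    norm_num
lemma key_lemA (k : ℕ) (a C M : ℝ) (ρ : ℝ → ℝ) (hk : 1 ≤ k) (ha : 0 < a) (hC : 0 < C)
    (hM : 1 ≤ M)
    (h2 : ∀ x : ℝ, |ρ x| ≤ C * (1 + |x|) ^ k)
    (h3 : ∀ x : ℝ, x < 0 → |ρ x / x ^ k| ≤ C * |x| ^ (-a))
    (h4 : ∀ x : ℝ, 0 < x → |ρ x / x ^ k - 1| ≤ C * x ^ (-a)) :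
    ∀ μ y : ℝ, 1 ≤ μ → |y| ≤ M →
      |ρ (μ * y) / μ ^ (k : ℝ) - (max y 0) ^ k|
        ≤ (C * 2 ^ k + C * M ^ k + 1) * μ ^ (-(min a (k : ℝ) / 2)) := by
  intro μ y hμ hy
  set c : ℝ := min a (k : ℝ) / 2 with hc_def
  have hk1 : (1 : ℝ) ≤ (k : ℝ) := by exact_mod_cast hk
  have hμ0 : (0 : ℝ) < μ := lt_of_lt_of_le zero_lt_one hμ
  have hc_le_a2 : c ≤ a / 2 := by
    have := min_le_left a (k : ℝ); rw [hc_def]; linarith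
  have hc_le_k2 : c ≤ (k : ℝ) / 2 := by
    have := min_le_right a (k : ℝ); rw [hc_def]; linarith
  have hμc0 : (0 : ℝ) < μ ^ (-c) := Real.rpow_pos_of_pos hμ0 _
  have hpow : ∀ e : ℝ, (μ ^ e) ^ k = μ ^ (e * k) := by
    intro e
    rw [← Real.rpow_natCast (μ ^ e) k, ← Real.rpow_mul (le_of_lt hμ0)]
  set sq : ℝ := μ ^ (-(2⁻¹ : ℝ)) with hsq_def
  have hsq0 : (0 : ℝ) < sq := Real.rpow_pos_of_pos hμ0 _
  have hμsq : μ * sq = μ ^ ((2⁻¹ : ℝ)) := by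
    have h := Real.rpow_add hμ0 1 (-(2⁻¹ : ℝ))
    rw [Real.rpow_one] at h
    rw [hsq_def, ← h]
    norm_num
  have hsqrt1 : (1 : ℝ) ≤ μ ^ ((2⁻¹ : ℝ)) := by
    have := Real.rpow_le_rpow_of_exponent_le hμ (by norm_num : (0:ℝ) ≤ 2⁻¹)
    rwa [Real.rpow_zero] at this
  have hμknat : μ ^ ((k : ℝ)) = μ ^ k := Real.rpow_natCast μ k
  have hμk0 : (0 : ℝ) < μ ^ k := pow_pos hμ0 k
  have hCM0 : (0 : ℝ) ≤ C * M ^ k := by positivity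
  have hC20 : (0 : ℝ) ≤ C * 2 ^ k := by positivity
  rcases le_or_gt (|y|) sq with hcase | hcase
  · -- Case A : |y| ≤ sq
    have hmax_le : max y 0 ≤ sq := max_le (le_trans (le_abs_self y) hcase) (le_of_lt hsq0)
    have hmax0 : (0 : ℝ) ≤ max y 0 := le_max_right y 0
    have hB : (max y 0) ^ k ≤ μ ^ (-c) := by
      calc (max y 0) ^ k ≤ sq ^ k := pow_le_pow_left₀ hmax0 hmax_le k
        _ = μ ^ (-(2⁻¹ : ℝ) * k) := hpow _
        _ ≤ μ ^ (-c) := by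
            refine Real.rpow_le_rpow_of_exponent_le hμ ?_
            nlinarith
    have hμy : |μ * y| ≤ μ ^ ((2⁻¹ : ℝ)) := by
      rw [abs_mul, abs_of_pos hμ0, ← hμsq]
      exact mul_le_mul_of_nonneg_left hcase (le_of_lt hμ0)
    have hA : |ρ (μ * y)| / μ ^ k ≤ C * 2 ^ k * μ ^ (-c) := by
      have e1 : |ρ (μ * y)| ≤ C * (2 * μ ^ ((2⁻¹ : ℝ))) ^ k := by
        refine le_trans (h2 (μ * y)) ?_
        refine mul_le_mul_of_nonneg_left ?_ (le_of_lt hC)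
        refine pow_le_pow_left₀ (by positivity) ?_ k
        linarith
      have e2 : (2 * μ ^ ((2⁻¹ : ℝ))) ^ k = 2 ^ k * μ ^ ((2⁻¹ : ℝ) * k) := by
        rw [mul_pow, hpow]
      calc |ρ (μ * y)| / μ ^ k ≤ C * (2 ^ k * μ ^ ((2⁻¹ : ℝ) * k)) / μ ^ k := by
            rw [← e2]
            exact div_le_div_of_nonneg_right e1 (le_of_lt hμk0)
        _ = C * 2 ^ k * (μ ^ ((2⁻¹ : ℝ) * k) / μ ^ ((k : ℝ))) := by
            rw [hμknat]; ring
        _ = C * 2 ^ k * μ ^ ((2⁻¹ : ℝ) * k - (k : ℝ)) := by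
            rw [Real.rpow_sub hμ0]
        _ ≤ C * 2 ^ k * μ ^ (-c) := by
            refine mul_le_mul_of_nonneg_left ?_ hC20
            refine Real.rpow_le_rpow_of_exponent_le hμ ?_
            nlinarith
    calc |ρ (μ * y) / μ ^ ((k:ℝ)) - (max y 0) ^ k|
        ≤ |ρ (μ * y) / μ ^ ((k:ℝ))| + |(max y 0) ^ k| := abs_sub _ _
      _ = |ρ (μ * y)| / μ ^ k + (max y 0) ^ k := by
          rw [hμknat, abs_div, abs_of_pos hμk0, abs_of_nonneg (pow_nonneg hmax0 k)]
      _ ≤ C * 2 ^ k * μ ^ (-c) + μ ^ (-c) := add_le_add hA hB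
      _ = (C * 2 ^ k + 1) * μ ^ (-c) := by ring
      _ ≤ (C * 2 ^ k + C * M ^ k + 1) * μ ^ (-c) :=
          mul_le_mul_of_nonneg_right (by linarith) (le_of_lt hμc0)
  · rcases le_or_gt sq y with hby | hby
    · -- Case B : y ≥ sq > 0
      have hy0 : 0 < y := lt_of_lt_of_le hsq0 hby
      set t : ℝ := μ * y with ht_def
      have ht0 : 0 < t := mul_pos hμ0 hy0
      have htk : (0 : ℝ) < t ^ k := pow_pos ht0 k
      have htsq : μ ^ ((2⁻¹ : ℝ)) ≤ t := by
        rw [← hμsq, ht_def]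
        exact mul_le_mul_of_nonneg_left hby (le_of_lt hμ0)
      have hta : t ^ (-a) ≤ μ ^ ((2⁻¹ : ℝ) * -a) := by
        have h1 : μ ^ ((2⁻¹ : ℝ) * a) ≤ t ^ a := by
          rw [Real.rpow_mul (le_of_lt hμ0)]
          exact Real.rpow_le_rpow (le_of_lt (Real.rpow_pos_of_pos hμ0 _)) htsq (le_of_lt ha)
        rw [Real.rpow_neg (le_of_lt ht0)]
        rw [show (2⁻¹ : ℝ) * -a = -((2⁻¹ : ℝ) * a) by ring, Real.rpow_neg (le_of_lt hμ0)]
        exact inv_anti₀ (Real.rpow_pos_of_pos hμ0 _) h1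
      have h5 := h4 t ht0
      have e1 : ρ t / t ^ k - 1 = (ρ t - t ^ k) / t ^ k := by field_simp
      rw [e1, abs_div, abs_of_pos htk, div_le_iff₀ htk] at h5
      have hmax : max y 0 = y := max_eq_left (le_of_lt hy0)
      have htk_eq : t ^ k = y ^ k * μ ^ k := by rw [ht_def, mul_pow]; ring
      have e2 : ρ t / μ ^ ((k:ℝ)) - y ^ k = (ρ t - t ^ k) / μ ^ k := by
        rw [hμknat, sub_div, htk_eq, mul_div_assoc, div_self (ne_of_gt hμk0), mul_one]
      have hyM : y ^ k ≤ M ^ k :=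
        pow_le_pow_left₀ (le_of_lt hy0) (le_trans (le_abs_self y) hy) k
      have hstep : |ρ t - t ^ k| / μ ^ k ≤ C * (t ^ (-a)) * y ^ k := by
        rw [div_le_iff₀ hμk0]
        calc |ρ t - t ^ k| ≤ C * t ^ (-a) * t ^ k := h5
          _ = C * t ^ (-a) * y ^ k * μ ^ k := by rw [htk_eq]; ring
      rw [hmax, e2, abs_div, abs_of_pos hμk0]
      have hexp_a : μ ^ ((2⁻¹ : ℝ) * -a) ≤ μ ^ (-c) :=
        Real.rpow_le_rpow_of_exponent_le hμ (by linarith)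
      have hta' : t ^ (-a) ≤ μ ^ (-c) := le_trans hta hexp_a
      have hta0 : (0 : ℝ) ≤ t ^ (-a) := le_of_lt (Real.rpow_pos_of_pos ht0 _)
      calc |ρ t - t ^ k| / μ ^ k ≤ C * (t ^ (-a)) * y ^ k := hstep
        _ ≤ C * (μ ^ (-c)) * M ^ k := by
            refine mul_le_mul ?_ hyM (by positivity) (by positivity)
            exact mul_le_mul_of_nonneg_left hta' (le_of_lt hC)
        _ = C * M ^ k * μ ^ (-c) := by ring
        _ ≤ (C * 2 ^ k + C * M ^ k + 1) * μ ^ (-c) :=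
            mul_le_mul_of_nonneg_right (by linarith) (le_of_lt hμc0)
    · -- Case C : y ≤ -sq
      have hyneg : y < 0 := by
        rcases le_or_gt 0 y with h | h
        · exfalso; rw [abs_of_nonneg h] at hcase; linarith
        · exact h
      have hsqy : sq ≤ -y := by
        rw [abs_of_neg hyneg] at hcase
        linarith
      set t : ℝ := μ * y with ht_def
      have htneg : t < 0 := mul_neg_of_pos_of_neg hμ0 hyneg
      have hts : |t| = μ * |y| := by rw [ht_def, abs_mul, abs_of_pos hμ0]
      have htabs0 : (0 : ℝ) < |t| := abs_pos.mpr (ne_of_lt htneg)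
      have htsq : μ ^ ((2⁻¹ : ℝ)) ≤ |t| := by
        rw [hts, ← hμsq, abs_of_neg hyneg]
        exact mul_le_mul_of_nonneg_left hsqy (le_of_lt hμ0)
      have hta : |t| ^ (-a) ≤ μ ^ ((2⁻¹ : ℝ) * -a) := by
        have h1 : μ ^ ((2⁻¹ : ℝ) * a) ≤ |t| ^ a := by
          rw [Real.rpow_mul (le_of_lt hμ0)]
          exact Real.rpow_le_rpow (le_of_lt (Real.rpow_pos_of_pos hμ0 _)) htsq (le_of_lt ha)
        rw [Real.rpow_neg (le_of_lt htabs0)]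
        rw [show (2⁻¹ : ℝ) * -a = -((2⁻¹ : ℝ) * a) by ring, Real.rpow_neg (le_of_lt hμ0)]
        exact inv_anti₀ (Real.rpow_pos_of_pos hμ0 _) h1
      have h5 := h3 t htneg
      have e1 : |ρ t / t ^ k| = |ρ t| / |t| ^ k := by rw [abs_div, abs_pow]
      rw [e1, div_le_iff₀ (pow_pos htabs0 k)] at h5
      have hmax : max y 0 = 0 := max_eq_right (le_of_lt hyneg)
      have hyM : |y| ^ k ≤ M ^ k := pow_le_pow_left₀ (abs_nonneg y) hy k
      have htk_eq : |t| ^ k = |y| ^ k * μ ^ k := by rw [hts, mul_pow]; ring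
      rw [hmax, zero_pow (by omega : k ≠ 0), sub_zero, hμknat, abs_div, abs_of_pos hμk0]
      have hexp_a : μ ^ ((2⁻¹ : ℝ) * -a) ≤ μ ^ (-c) :=
        Real.rpow_le_rpow_of_exponent_le hμ (by linarith)
      have hta' : |t| ^ (-a) ≤ μ ^ (-c) := le_trans hta hexp_a
      calc |ρ t| / μ ^ k ≤ (C * |t| ^ (-a) * |t| ^ k) / μ ^ k := by
            exact div_le_div_of_nonneg_right h5 (le_of_lt hμk0)
        _ = C * |t| ^ (-a) * |y| ^ k := by
            rw [htk_eq, mul_div_assoc, mul_div_cancel_right₀ _ (ne_of_gt hμk0)]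
        _ ≤ C * (μ ^ (-c)) * M ^ k := by
            refine mul_le_mul ?_ hyM (by positivity) (by positivity)
            exact mul_le_mul_of_nonneg_left hta' (le_of_lt hC)
        _ = C * M ^ k * μ ^ (-c) := by ring
        _ ≤ (C * 2 ^ k + C * M ^ k + 1) * μ ^ (-c) :=
            mul_le_mul_of_nonneg_right (by linarith) (le_of_lt hμc0)
noncomputable def pnM (D : ℝ) (k L : ℕ) : ℝ := (max D 1) ^ (k ^ L) + 1
noncomputable def pnC1 (C M : ℝ) (k : ℕ) : ℝ := C * 2 ^ k + C * M ^ k + 1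
noncomputable def pnK (M : ℝ) (k : ℕ) : ℝ := (k : ℝ) * M ^ k
noncomputable def pnc (a : ℝ) (k : ℕ) : ℝ := min a (k : ℝ) / 2

lemma key_iter (L k : ℕ) (a C D : ℝ) (ρ : ℝ → ℝ) (hk : 1 ≤ k) (ha : 0 < a) (hC : 0 < C)
    (hD : 0 < D)
    (h2 : ∀ x : ℝ, |ρ x| ≤ C * (1 + |x|) ^ k)
    (h3 : ∀ x : ℝ, x < 0 → |ρ x / x ^ k| ≤ C * |x| ^ (-a))
    (h4 : ∀ x : ℝ, 0 < x → |ρ x / x ^ k - 1| ≤ C * x ^ (-a))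
    (lam : ℝ) (hlam : 1 ≤ lam)
    (hlamc : pnC1 C (pnM D k L) k * (pnK (pnM D k L) k + 1) ^ L ≤ lam ^ pnc a k) :
    ∀ ℓ, 1 ≤ ℓ → ℓ ≤ L → ∀ x : ℝ, |x| ≤ D →
      |ρ^[ℓ] (lam * x) / lam ^ ((k : ℝ) ^ ℓ) - (max x 0) ^ (k ^ ℓ)|
        ≤ pnC1 C (pnM D k L) k * (pnK (pnM D k L) k + 1) ^ ℓ * lam ^ (-pnc a k) := by
  set M : ℝ := pnM D k L with hM_def
  set C1 : ℝ := pnC1 C M k with hC1_def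
  set K : ℝ := pnK M k with hK_def
  set c : ℝ := pnc a k with hc_def
  have hmax1 : (1 : ℝ) ≤ max D 1 := le_max_right D 1
  have hM1' : (1 : ℝ) ≤ (max D 1) ^ (k ^ L) := one_le_pow₀ hmax1
  have hM1 : (1 : ℝ) ≤ M := by rw [hM_def]; unfold pnM; linarith
  have hC1pos : (0 : ℝ) < C1 := by rw [hC1_def]; unfold pnC1; positivity
  have hK0 : (0 : ℝ) ≤ K := by rw [hK_def]; unfold pnK; positivity
  have hK1 : (1 : ℝ) ≤ K + 1 := by linarith
  have hc0 : (0 : ℝ) < c := by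
    rw [hc_def]; unfold pnc
    have h1 : (0:ℝ) < (k : ℝ) := by positivity
    have := lt_min ha h1
    linarith
  have hlam0 : (0 : ℝ) < lam := lt_of_lt_of_le zero_lt_one hlam
  have hlamc0 : (0 : ℝ) < lam ^ c := Real.rpow_pos_of_pos hlam0 _
  have hlamnc : lam ^ (-c) = (lam ^ c)⁻¹ := Real.rpow_neg (le_of_lt hlam0) c
  have hlamnc0 : (0 : ℝ) < lam ^ (-c) := Real.rpow_pos_of_pos hlam0 _
  have hsmall : ∀ ℓ, ℓ ≤ L → C1 * (K + 1) ^ ℓ * lam ^ (-c) ≤ 1 := by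
    intro ℓ hℓ
    rw [hlamnc, ← div_eq_mul_inv, div_le_one hlamc0]
    calc C1 * (K + 1) ^ ℓ ≤ C1 * (K + 1) ^ L :=
          mul_le_mul_of_nonneg_left (pow_le_pow_right₀ hK1 hℓ) (le_of_lt hC1pos)
      _ ≤ lam ^ c := hlamc
  have hDM : D ≤ M := by
    rw [hM_def]; unfold pnM
    have : D ≤ max D 1 := le_max_left D 1
    have h2' : max D 1 ≤ (max D 1) ^ (k ^ L) :=
      le_self_pow₀ (by linarith) (by positivity)
    linarith
  have hlemA : ∀ μ y : ℝ, 1 ≤ μ → |y| ≤ M →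
      |ρ (μ * y) / μ ^ (k : ℝ) - (max y 0) ^ k| ≤ C1 * μ ^ (-c) :=
    key_lemA k a C M ρ hk ha hC hM1 h2 h3 h4
  intro ℓ
  induction ℓ with
  | zero => omega
  | succ n ih =>
    intro _ hnL x hx
    rcases Nat.eq_zero_or_pos n with hn0 | hn1
    · -- base case ℓ = 1
      subst hn0
      have hbase := hlemA lam x hlam (le_trans hx hDM)
      simp only [zero_add, pow_one, Function.iterate_one]
      calc |ρ (lam * x) / lam ^ ((k:ℝ)) - (max x 0) ^ k|
          ≤ C1 * lam ^ (-c) := hbase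
        _ ≤ C1 * (K + 1) * lam ^ (-c) :=
            mul_le_mul_of_nonneg_right (by nlinarith) (le_of_lt hlamnc0)
    · -- inductive step
      have hnL' : n ≤ L := by omega
      set μ : ℝ := lam ^ ((k : ℝ) ^ n) with hμ_def
      set v : ℝ := ρ^[n] (lam * x) with hv_def
      set y : ℝ := v / μ with hy_def
      set q : ℝ := (max x 0) ^ (k ^ n) with hq_def
      have hihn := ih hn1 hnL' x hx
      have hq0 : (0 : ℝ) ≤ q := by rw [hq_def]; positivity
      have hqM : q ≤ M - 1 := by
        rw [hq_def, hM_def]; unfold pnM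
        have h1 : max x 0 ≤ max D 1 :=
          max_le (le_trans (le_abs_self x) (le_trans hx (le_max_left D 1))) (le_trans zero_le_one hmax1)
        calc (max x 0) ^ (k ^ n) ≤ (max D 1) ^ (k ^ n) :=
              pow_le_pow_left₀ (le_max_right x 0) h1 _
          _ ≤ (max D 1) ^ (k ^ L) :=
              pow_le_pow_right₀ hmax1 (Nat.pow_le_pow_right hk hnL')
          _ = (max D 1) ^ (k ^ L) + 1 - 1 := by ring
      have hsm := hsmall n hnL'
      have hyM : |y| ≤ M := by
        have h1 : |y| ≤ |y - q| + |q| := by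
          calc |y| = |(y - q) + q| := by ring_nf
            _ ≤ |y - q| + |q| := abs_add_le _ _
        have h2' : |q| = q := abs_of_nonneg hq0
        have h3' : |y - q| ≤ 1 := le_trans hihn hsm
        linarith
      have hμ1 : 1 ≤ μ := by
        rw [hμ_def]
        calc (1:ℝ) = lam ^ (0:ℝ) := (Real.rpow_zero lam).symm
          _ ≤ lam ^ ((k:ℝ) ^ n) := Real.rpow_le_rpow_of_exponent_le hlam (by positivity)
      have hμ0 : (0 : ℝ) < μ := lt_of_lt_of_le zero_lt_one hμ1
      have hμy : μ * y = v := by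
        rw [hy_def, mul_comm, div_mul_cancel₀ v (ne_of_gt hμ0)]
      have hlamA := hlemA μ y hμ1 hyM
      rw [hμy] at hlamA
      have hexp : lam ^ ((k : ℝ) ^ (n + 1)) = μ ^ ((k : ℝ)) := by
        rw [hμ_def, ← Real.rpow_mul (le_of_lt hlam0), ← pow_succ]
      have hit : ρ^[n + 1] (lam * x) = ρ v := by
        rw [hv_def, Function.iterate_succ_apply']
      have hμc : μ ^ (-c) ≤ lam ^ (-c) := by
        rw [Real.rpow_neg (le_of_lt hμ0), hlamnc]
        refine inv_anti₀ hlamc0 ?_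
        have := Real.rpow_le_rpow (le_of_lt hlam0)
          (by rw [hμ_def]
              calc lam = lam ^ (1:ℝ) := (Real.rpow_one lam).symm
                _ ≤ lam ^ ((k:ℝ) ^ n) := Real.rpow_le_rpow_of_exponent_le hlam
                    (one_le_pow₀ (by exact_mod_cast hk))
            : lam ≤ μ) (le_of_lt hc0)
        exact this
      have hpq : |(max y 0) ^ k - q ^ k| ≤ K * (C1 * (K + 1) ^ n * lam ^ (-c)) := by
        have hpM : |max y 0| ≤ M := by
          rw [abs_of_nonneg (le_max_right y 0)]
          exact max_le (le_trans (le_abs_self y) hyM) (by linarith)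
        have hqM' : |q| ≤ M := by rw [abs_of_nonneg hq0]; linarith
        have hBB := abs_pow_sub_pow_le' k M (max y 0) q hM1 hpM hqM'
        have hmaxsub : |max y 0 - q| ≤ |y - q| := by
          calc |max y 0 - q| = |max y 0 - max q 0| := by rw [max_eq_left hq0]
            _ ≤ |y - q| := abs_max_sub_max_le_abs y q 0
        calc |(max y 0) ^ k - q ^ k| ≤ (k : ℝ) * M ^ k * |max y 0 - q| := hBB
          _ ≤ (k : ℝ) * M ^ k * |y - q| := by
              refine mul_le_mul_of_nonneg_left hmaxsub (by positivity)
          _ ≤ (k : ℝ) * M ^ k * (C1 * (K + 1) ^ n * lam ^ (-c)) := by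
              refine mul_le_mul_of_nonneg_left hihn (by positivity)
          _ = K * (C1 * (K + 1) ^ n * lam ^ (-c)) := rfl
      have hqk : q ^ k = (max x 0) ^ (k ^ (n + 1)) := by
        rw [hq_def, ← pow_mul, ← pow_succ]
      calc |ρ^[n+1] (lam * x) / lam ^ ((k : ℝ) ^ (n+1)) - (max x 0) ^ (k ^ (n+1))|
          = |(ρ (μ * y) / μ ^ ((k:ℝ)) - (max y 0) ^ k) + ((max y 0) ^ k - q ^ k)| := by
            rw [hit, hexp, ← hμy, ← hqk]
            congr 1
            ring
        _ ≤ |ρ (μ * y) / μ ^ ((k:ℝ)) - (max y 0) ^ k| + |(max y 0) ^ k - q ^ k| :=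
            abs_add_le _ _
        _ ≤ C1 * μ ^ (-c) + K * (C1 * (K + 1) ^ n * lam ^ (-c)) :=
            add_le_add (hlemA μ y hμ1 hyM) hpq
        _ ≤ C1 * lam ^ (-c) + K * (C1 * (K + 1) ^ n * lam ^ (-c)) := by
            refine add_le_add (mul_le_mul_of_nonneg_left hμc (le_of_lt hC1pos)) le_rfl
        _ = (C1 + K * C1 * (K + 1) ^ n) * lam ^ (-c) := by ring
        _ ≤ C1 * (K + 1) ^ (n + 1) * lam ^ (-c) := by
            refine mul_le_mul_of_nonneg_right ?_ (le_of_lt hlamnc0)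
            have h1 : (1:ℝ) ≤ (K + 1) ^ n := one_le_pow₀ hK1
            have : (K + 1) ^ (n + 1) = (K + 1) ^ n * K + (K + 1) ^ n := by ring
            rw [this]
            nlinarith [mul_le_mul_of_nonneg_left h1 (le_of_lt hC1pos)]

noncomputable def idNet : NeuralNet 1 1 where
  width _ := 1
  width_zero := rfl
  width_last := rfl
  A _ := Matrix.of fun _ _ => 1
  b _ _ := 0

lemma idNet_realize (ρ : ℝ → ℝ) (x : Fin 1 → ℝ) : idNet.realize ρ x = x 0 := by
  unfold NeuralNet.realize
  have h : ∀ i : Fin (idNet.width (1 - 1 + 1)),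
      ((∑ j, idNet.A (1 - 1) i j * idNet.hidden ρ x (1 - 1) j) + idNet.b (1 - 1) i)
        = x 0 := by
    intro i
    have hb : idNet.b (1 - 1) i = 0 := rfl
    rw [hb, add_zero]
    have hterm : ∀ j : Fin (idNet.width (1 - 1)),
        idNet.A (1 - 1) i j * idNet.hidden ρ x (1 - 1) j = x 0 := by
      intro j
      have h1 : idNet.A (1 - 1) i j = 1 := rfl
      have h2 : idNet.hidden ρ x (1 - 1) j = x 0 := by
        show x (Fin.cast idNet.width_zero j) = x 0
        exact congrArg x (Subsingleton.elim _ _)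
      rw [h1, h2, one_mul]
    rw [Finset.sum_congr rfl fun j _ => hterm j, Finset.sum_const, Finset.card_univ,
      Fintype.card_fin]
    show (idNet.width 0) • x 0 = x 0
    rw [idNet.width_zero, one_smul]
  rw [Finset.sum_congr rfl fun i _ => h i, Finset.sum_const, Finset.card_univ,
    Fintype.card_fin]
  show (idNet.width 1) • x 0 = x 0
  rw [idNet.width_last, one_smul]

lemma idNet_conn : idNet.conn ≤ 2 := by
  unfold NeuralNet.conn
  rw [Finset.sum_range_one]
  refine le_trans (add_le_add (Finset.card_filter_le _ _) (Finset.card_filter_le _ _)) ?_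
  simp only [Finset.card_univ, Fintype.card_prod, Fintype.card_fin]
  show idNet.width (0 + 1) * idNet.width 0 + idNet.width (0 + 1) ≤ 2
  norm_num [idNet]


/-- Approximation of `x^{k^L}` on `[-D,D]` by a network with `L+1` layers
and connectivity at most `2L+2`, with weights bounded by `A·ε^{-n}`, where `A > 0` and the
positive integer `n` depend only on `L, k, a, b, D`. -/
theorem approx_power_kL
    (L k : ℕ) (a b C : ℝ) (ρ : ℝ → ℝ) (hk : 1 ≤ k)
    (ha : 0 < a) (hb : 0 < b) (hC : 0 < C)
    (hρ : StronglySigmoidal ρ k a b C) :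
    ∀ D : ℝ, 0 < D → ∃ (A : ℝ) (n : ℕ), 0 < A ∧ 0 < n ∧
      ∀ ε : ℝ, 0 < ε → ε < 1 →
        ∃ Φ : NeuralNet 1 (L + 1), Φ.conn ≤ 2 * L + 2 ∧
          Φ.weightsBdd (A * (ε ^ n)⁻¹) ∧
          ∀ x : ℝ, |x| ≤ D →
            |x ^ k ^ L - Φ.realize ρ fun _ => x| ≤ ε := by
  obtain ⟨⟨hcont, hbot, htop, h2⟩, hdiff, h3, h4, h5⟩ := hρ
  intro D hD
  rcases Nat.eq_zero_or_pos L with hL0 | hL1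
  · -- trivial case L = 0 : the identity network
    subst hL0
    refine ⟨1, 1, one_pos, one_pos, fun ε hε hε1 => ?_⟩
    refine ⟨idNet, by simpa using idNet_conn, ?_, ?_⟩
    · have hεinv : (1 : ℝ) ≤ (ε ^ 1)⁻¹ := by
        rw [pow_one]
        rw [le_inv_comm₀ one_pos hε]
        simpa using le_of_lt hε1
      intro ℓ _
      constructor
      · intro i j
        show |(1 : ℝ)| ≤ 1 * (ε ^ 1)⁻¹
        rw [abs_one, one_mul]
        exact hεinv
      · intro i
        show |(0 : ℝ)| ≤ 1 * (ε ^ 1)⁻¹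
        rw [abs_zero, one_mul]
        linarith
    · intro x hx
      rw [idNet_realize ρ (fun _ => x)]
      simp only [pow_zero, pow_one]
      simp [le_of_lt hε]
  · -- main case L ≥ 1
    set M : ℝ := pnM D k L with hM_def
    set C1 : ℝ := pnC1 C M k with hC1_def
    set K : ℝ := pnK M k with hK_def
    set c : ℝ := pnc a k with hc_def
    set EL : ℝ := C1 * (K + 1) ^ L with hEL_def
    set T : ℝ := 3 * EL + 1 with hT_def
    set B : ℝ := T ^ (c⁻¹ : ℝ) with hB_def
    set m : ℕ := max 1 ⌈c⁻¹⌉₊ with hm_def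
    -- basic positivity facts
    have hmax1 : (1 : ℝ) ≤ max D 1 := le_max_right D 1
    have hM1 : (1 : ℝ) ≤ M := by
      have : (1 : ℝ) ≤ (max D 1) ^ (k ^ L) := one_le_pow₀ hmax1
      rw [hM_def]; unfold pnM; linarith
    have hC1pos : (0 : ℝ) < C1 := by rw [hC1_def]; unfold pnC1; positivity
    have hK0 : (0 : ℝ) ≤ K := by rw [hK_def]; unfold pnK; positivity
    have hc0 : (0 : ℝ) < c := by
      rw [hc_def]; unfold pnc
      have h1 : (0:ℝ) < (k : ℝ) := by positivity
      have := lt_min ha h1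
      linarith
    have hEL0 : (0 : ℝ) < EL := by
      rw [hEL_def]
      have : (0:ℝ) < (K + 1) ^ L := by positivity
      positivity
    have hT0 : (0 : ℝ) < T := by rw [hT_def]; linarith
    have hT1 : (1 : ℝ) ≤ T := by rw [hT_def]; linarith
    have hB1 : (1 : ℝ) ≤ B := by
      rw [hB_def]
      calc (1:ℝ) = T ^ (0:ℝ) := (Real.rpow_zero T).symm
        _ ≤ T ^ (c⁻¹ : ℝ) := Real.rpow_le_rpow_of_exponent_le hT1 (by positivity)
    have hB0 : (0 : ℝ) < B := lt_of_lt_of_le zero_lt_one hB1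
    have hBc : B ^ c = T := by
      rw [hB_def, ← Real.rpow_mul (le_of_lt hT0), inv_mul_cancel₀ (ne_of_gt hc0),
        Real.rpow_one]
    have hm1 : 1 ≤ m := le_max_left 1 _
    have hmc1 : (1 : ℝ) ≤ (m : ℝ) * c := by
      have h1 : (c⁻¹ : ℝ) ≤ (⌈c⁻¹⌉₊ : ℝ) := Nat.le_ceil _
      have h2' : (⌈c⁻¹⌉₊ : ℝ) ≤ (m : ℝ) := by
        rw [hm_def]; exact_mod_cast le_max_right 1 ⌈c⁻¹⌉₊
      have h3' : c⁻¹ * c ≤ (m:ℝ) * c :=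
        mul_le_mul_of_nonneg_right (le_trans h1 h2') (le_of_lt hc0)
      rwa [inv_mul_cancel₀ (ne_of_gt hc0)] at h3'
    refine ⟨B, m, hB0, by omega, fun ε hε hε1 => ?_⟩
    -- the scale factor
    set lam : ℝ := B * (ε ^ m)⁻¹ with hlam_def
    have hεm0 : (0 : ℝ) < ε ^ m := pow_pos hε m
    have hεm1 : ε ^ m ≤ 1 := pow_le_one₀ (le_of_lt hε) (le_of_lt hε1)
    have hεminv1 : (1 : ℝ) ≤ (ε ^ m)⁻¹ := by
      rw [le_inv_comm₀ one_pos hεm0]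
      simpa using hεm1
    have hlam1 : (1 : ℝ) ≤ lam := by
      rw [hlam_def]
      calc (1:ℝ) = 1 * 1 := by ring
        _ ≤ B * (ε ^ m)⁻¹ :=
            mul_le_mul hB1 hεminv1 zero_le_one (le_of_lt hB0)
    have hlam0 : (0 : ℝ) < lam := lt_of_lt_of_le zero_lt_one hlam1
    have hlamc_eq : lam ^ c = T * ((ε ^ m) ^ c)⁻¹ := by
      rw [hlam_def, Real.mul_rpow (le_of_lt hB0) (by positivity), hBc,
        ← Real.inv_rpow (le_of_lt hεm0)]
    have hεmc0 : (0 : ℝ) < (ε ^ m) ^ c := Real.rpow_pos_of_pos hεm0 _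
    have hεmc : (ε ^ m) ^ c ≤ ε := by
      have e : ((ε ^ m : ℝ)) ^ c = ε ^ ((m:ℝ) * c) := by
        rw [← Real.rpow_natCast ε m, ← Real.rpow_mul (le_of_lt hε)]
      rw [e]
      calc ε ^ ((m:ℝ) * c) ≤ ε ^ (1:ℝ) :=
            Real.rpow_le_rpow_of_exponent_ge hε (le_of_lt hε1) hmc1
        _ = ε := Real.rpow_one ε
    have hELlam : EL ≤ lam ^ c := by
      have h1 : (1 : ℝ) ≤ ((ε ^ m) ^ c)⁻¹ := by
        rw [le_inv_comm₀ one_pos hεmc0]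
        simpa using le_trans hεmc (le_of_lt hε1)
      have h2' : T * 1 ≤ T * ((ε ^ m) ^ c)⁻¹ :=
        mul_le_mul_of_nonneg_left h1 (le_of_lt hT0)
      rw [hlamc_eq]
      rw [hT_def] at h2' ⊢
      linarith
    have hlamc0 : (0 : ℝ) < lam ^ c := Real.rpow_pos_of_pos hlam0 _
    have herr : 2 * EL * lam ^ (-c) ≤ ε := by
      have h1 : ε⁻¹ ≤ ((ε ^ m) ^ c)⁻¹ := inv_anti₀ hεmc0 hεmc
      have h2' : T * ε⁻¹ ≤ lam ^ c := by
        rw [hlamc_eq]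
        exact mul_le_mul_of_nonneg_left h1 (le_of_lt hT0)
      have h3' : (0:ℝ) < T * ε⁻¹ := by positivity
      have h4' : lam ^ (-c) ≤ (T * ε⁻¹)⁻¹ := by
        rw [Real.rpow_neg (le_of_lt hlam0)]
        exact inv_anti₀ h3' h2'
      have h5' : (T * ε⁻¹)⁻¹ = ε * T⁻¹ := by
        rw [mul_inv, inv_inv]; ring
      have h6' : 2 * EL * lam ^ (-c) ≤ 2 * EL * (ε * T⁻¹) := by
        refine mul_le_mul_of_nonneg_left ?_ (by positivity)
        rw [← h5']; exact h4'
      have h7' : 2 * EL * (ε * T⁻¹) ≤ ε := by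
        rw [show 2 * EL * (ε * T⁻¹) = (2 * EL) * T⁻¹ * ε by ring]
        have h8 : (2 * EL) * T⁻¹ ≤ 1 := by
          rw [← div_eq_mul_inv, div_le_one hT0, hT_def]
          linarith
        calc (2 * EL) * T⁻¹ * ε ≤ 1 * ε :=
              mul_le_mul_of_nonneg_right h8 (le_of_lt hε)
          _ = ε := one_mul ε
      linarith
    -- the network
    set N : ℕ := k ^ L with hN_def
    have hN1 : 1 ≤ N := Nat.one_le_pow L k (by omega)
    set w : ℝ := (lam ^ N)⁻¹ with hw_def
    set s : ℝ := ((-1 : ℝ)) ^ N with hs_def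
    have hlamN1 : (1 : ℝ) ≤ lam ^ N := one_le_pow₀ hlam1
    have hw0 : 0 < w := by rw [hw_def]; positivity
    have hw1 : w ≤ 1 := by
      rw [hw_def]
      exact inv_le_one_of_one_le₀ hlamN1
    have hsabs : |s| = 1 := by
      rw [hs_def, abs_pow, abs_neg, abs_one, one_pow]
    refine ⟨powerNet L lam w s, powerNet_conn_le hL1 lam w s, ?_, ?_⟩
    · -- weights bound
      refine powerNet_weightsBdd lam w s lam ?_ hlam1 ?_ ?_
      · rw [abs_of_pos hlam0]
      · rw [abs_of_pos hw0]; linarith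
      · rw [abs_mul, hsabs, one_mul, abs_of_pos hw0]; linarith
    · -- approximation bound
      intro x hx
      have hreal : (powerNet L lam w s).realize ρ (fun _ => x)
          = w * ρ^[L] (lam * x) + s * w * ρ^[L] (-lam * x) :=
        powerNet_realize hL1 lam w s ρ (fun _ => x)
      rw [hreal]
      have hcast : lam ^ ((k:ℝ) ^ L) = lam ^ N := by
        rw [hN_def, ← Real.rpow_natCast lam (k ^ L), Nat.cast_pow]
      have hiter := key_iter L k a C D ρ hk ha hC hD h2 h3 h4 lam hlam1
        (by rw [← hc_def, ← hM_def, ← hC1_def, ← hK_def, ← hEL_def]; exact hELlam)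
        L (by omega) le_rfl
      have e1 : |ρ^[L] (lam * x) / lam ^ ((k:ℝ) ^ L) - (max x 0) ^ N| ≤ EL * lam ^ (-c) := by
        have := hiter x hx
        rw [← hc_def, ← hM_def, ← hC1_def, ← hK_def, ← hN_def] at this
        calc |ρ^[L] (lam * x) / lam ^ ((k:ℝ) ^ L) - (max x 0) ^ N|
            ≤ C1 * (K + 1) ^ L * lam ^ (-c) := this
          _ = EL * lam ^ (-c) := by rw [hEL_def]
      have e2 : |ρ^[L] (-lam * x) / lam ^ ((k:ℝ) ^ L) - (max (-x) 0) ^ N|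
          ≤ EL * lam ^ (-c) := by
        have hxneg : |(-x)| ≤ D := by rwa [abs_neg]
        have := hiter (-x) hxneg
        rw [← hc_def, ← hM_def, ← hC1_def, ← hK_def, ← hN_def] at this
        have harg : lam * (-x) = -lam * x := by ring
        rw [harg] at this
        calc |ρ^[L] (-lam * x) / lam ^ ((k:ℝ) ^ L) - (max (-x) 0) ^ N|
            ≤ C1 * (K + 1) ^ L * lam ^ (-c) := this
          _ = EL * lam ^ (-c) := by rw [hEL_def]
      have hwe : ∀ u : ℝ, w * u = u / lam ^ ((k:ℝ) ^ L) := by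
        intro u
        rw [div_eq_mul_inv, hcast, mul_comm]
      have hxN : x ^ N = (max x 0) ^ N + s * (max (-x) 0) ^ N := by
        rw [hs_def]
        exact pow_eq_max_add N hN1 x
      have hN_goal : x ^ k ^ L = x ^ N := by rw [hN_def]
      rw [hN_goal]
      calc |x ^ N - (w * ρ^[L] (lam * x) + s * w * ρ^[L] (-lam * x))|
          = |((max x 0) ^ N - w * ρ^[L] (lam * x))
              + s * ((max (-x) 0) ^ N - w * ρ^[L] (-lam * x))| := by
            rw [hxN]; congr 1; ring
        _ ≤ |(max x 0) ^ N - w * ρ^[L] (lam * x)|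
              + |s * ((max (-x) 0) ^ N - w * ρ^[L] (-lam * x))| := abs_add_le _ _
        _ = |(max x 0) ^ N - w * ρ^[L] (lam * x)|
              + |(max (-x) 0) ^ N - w * ρ^[L] (-lam * x)| := by
            rw [abs_mul, hsabs, one_mul]
        _ ≤ EL * lam ^ (-c) + EL * lam ^ (-c) := by
            refine add_le_add ?_ ?_
            · rw [hwe, abs_sub_comm]
              exact e1
            · rw [hwe, abs_sub_comm]
              exact e2
        _ = 2 * EL * lam ^ (-c) := by ring
        _ ≤ ε := herr
end

section
/- Let D > 0 and let ρ : ℝ → ℝ be strongly sigmoidal of order k with constants a, b, C > 0. Then there exist A > 0 and a positive integer n depending only on k and a such that for every sufficiently small ε > 0 there is a neural network Ψ ∈ NN_{2,3(k+1),1,ρ} satisfying |x_+ − Ψ(x)| ≤ ε for all |x| ≤ D, with all weights of Ψ bounded in absolute value by A·ε^{−n}. -/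
open MeasureTheory Filter
open scoped Classical ENNReal NNReal

section Aux
open Finset fwdDiff

open Finset fwdDiff

lemma fd_pow (h : ℝ) (m : ℕ) : fwdDiff h (fun x:ℝ => x^m)
    = fun x => ∑ i ∈ Finset.range m, ((m.choose i : ℝ) * h^(m-i)) * x^i := by
  funext x
  show (x + h)^m - x^m = _
  have e : (x + h)^m = (∑ i ∈ range m, x ^ i * h ^ (m - i) * (m.choose i : ℝ)) + x ^ m := by
    rw [add_pow, Finset.sum_range_succ]; simp
  rw [e, add_sub_cancel_right]
  exact Finset.sum_congr rfl (fun i _ => by ring)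

lemma fd_iter_pow_lt (h : ℝ) : ∀ n, ∀ m < n, (fwdDiff h)^[n] (fun x:ℝ => x^m) = fun _ => 0 := by
  intro n
  induction n with
  | zero => intro m hm; exact absurd hm (Nat.not_lt_zero m)
  | succ n IH =>
    intro m hm
    rw [Function.iterate_succ_apply, fd_pow]
    have e : (fun x : ℝ => ∑ i ∈ range m, ((m.choose i:ℝ) * h^(m-i)) * x^i)
        = ∑ i ∈ range m, (((m.choose i:ℝ) * h^(m-i)) • fun x:ℝ => x^i) := by
      funext x; simp [Finset.sum_apply, smul_eq_mul]
    rw [e, fwdDiff_iter_finset_sum]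
    rw [Finset.sum_eq_zero]
    · rfl
    · intro i hi
      rw [fwdDiff_iter_const_smul, IH i (by have := Finset.mem_range.mp hi; omega)]
      funext y; simp

lemma fd_iter_pow_self (h : ℝ) : ∀ n, (fwdDiff h)^[n] (fun x:ℝ => x^n)
    = fun _ => (n.factorial : ℝ) * h^n := by
  intro n
  induction n with
  | zero => funext x; simp
  | succ n IH =>
    rw [Function.iterate_succ_apply, fd_pow]
    have e : (fun x : ℝ => ∑ i ∈ range (n+1), (((n+1).choose i:ℝ) * h^(n+1-i)) * x^i)
        = (∑ i ∈ range n, ((((n+1).choose i:ℝ) * h^(n+1-i)) • fun x:ℝ => x^i))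
          + ((((n+1).choose n:ℝ) * h^(n+1-n)) • fun x:ℝ => x^n) := by
      funext x; simp [Finset.sum_apply, smul_eq_mul, Finset.sum_range_succ]
    rw [e, fwdDiff_iter_add, fwdDiff_iter_const_smul, fwdDiff_iter_finset_sum, IH]
    rw [Finset.sum_eq_zero]
    · funext y
      have h1 : n + 1 - n = 1 := by omega
      simp only [Pi.add_apply, Pi.smul_apply, smul_eq_mul, Pi.zero_apply, zero_add,
        Nat.choose_succ_self_right, Nat.factorial_succ, h1]
      push_cast
      ring
    · intro i hi
      rw [fwdDiff_iter_const_smul, fd_iter_pow_lt h n i (Finset.mem_range.mp hi)]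
      funext y; simp

lemma fd_iter_pow_affine (h : ℝ) : ∀ n, ∃ c : ℝ, (fwdDiff h)^[n] (fun x:ℝ => x^(n+1))
    = fun x => ((n+1).factorial : ℝ) * h^n * x + c := by
  intro n
  induction n with
  | zero => exact ⟨0, by funext x; simp⟩
  | succ n IH =>
    obtain ⟨c, hc⟩ := IH
    refine ⟨((n+2:ℕ) : ℝ) * h * c + (((n+2).choose n : ℝ) * h^2) * ((n.factorial : ℝ) * h^n), ?_⟩
    rw [Function.iterate_succ_apply, fd_pow]
    have e : (fun x : ℝ => ∑ i ∈ range (n+2), (((n+2).choose i:ℝ) * h^(n+2-i)) * x^i)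
        = ((∑ i ∈ range n, ((((n+2).choose i:ℝ) * h^(n+2-i)) • fun x:ℝ => x^i))
          + ((((n+2).choose n:ℝ) * h^(n+2-n)) • fun x:ℝ => x^n))
          + ((((n+2).choose (n+1):ℝ) * h^(n+2-(n+1))) • fun x:ℝ => x^(n+1)) := by
      funext x
      simp [Finset.sum_apply, smul_eq_mul, Finset.sum_range_succ]
    rw [e, fwdDiff_iter_add, fwdDiff_iter_add, fwdDiff_iter_finset_sum,
      fwdDiff_iter_const_smul, fwdDiff_iter_const_smul, fd_iter_pow_self, hc]
    rw [Finset.sum_eq_zero]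
    · funext y
      have h1 : n + 2 - (n+1) = 1 := by omega
      have h2 : n + 2 - n = 2 := by omega
      have h3 : (n+2).choose (n+1) = n + 2 := Nat.choose_succ_self_right (n+1)
      simp only [Pi.add_apply, Pi.smul_apply, smul_eq_mul, Pi.zero_apply, zero_add, h1, h2, h3,
        Nat.factorial_succ]
      push_cast
      ring
    · intro i hi
      rw [fwdDiff_iter_const_smul, fd_iter_pow_lt h n i (Finset.mem_range.mp hi)]
      funext y; simp

lemma key_identity (h : ℝ) (n : ℕ) : ∃ c : ℝ, ∀ x : ℝ,
    ∑ j ∈ range (n+1), ((-1:ℝ)^(n-j) * (n.choose j : ℝ)) * (x + (j:ℝ)*h)^(n+1)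
      = ((n+1).factorial : ℝ) * h^n * x + c := by
  obtain ⟨c, hc⟩ := fd_iter_pow_affine h n
  refine ⟨c, fun x => ?_⟩
  rw [show ((n+1).factorial : ℝ) * h^n * x + c = (fun x => ((n+1).factorial : ℝ) * h^n * x + c) x from rfl, ← hc]
  rw [fwdDiff_iter_eq_sum_shift]
  apply Finset.sum_congr rfl
  intro j _
  rw [zsmul_eq_mul, nsmul_eq_mul]
  push_cast
  ring


lemma approx_err (k : ℕ) (a C : ℝ) (ρ : ℝ → ℝ) (hk : 1 ≤ k) (ha : 0 < a) (hC : 0 < C)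
    (hgrowth : ∀ x : ℝ, |ρ x| ≤ C * (1 + |x|) ^ k)
    (hneg : ∀ x : ℝ, x < 0 → |ρ x / x ^ k| ≤ C * |x| ^ (-a))
    (hpos : ∀ x : ℝ, 0 < x → |ρ x / x ^ k - 1| ≤ C * x ^ (-a))
    (α δ R t : ℝ) (hα : 1 ≤ α) (hδ : 0 < δ) (hδα : 1 ≤ α * δ) (ht : |t| ≤ R) :
    |max t 0 ^ k - ρ (α * t) / α ^ k|
      ≤ (1 + 2^k * C) * δ^k + C * R^k * (α * δ) ^ (-a) := by
  have hα0 : (0:ℝ) < α := lt_of_lt_of_le one_pos hα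
  have hαk : (0:ℝ) < α ^ k := pow_pos hα0 k
  have hR : (0:ℝ) ≤ R := le_trans (abs_nonneg t) ht
  have hrpow_pos : (0:ℝ) < (α * δ) ^ (-a) := Real.rpow_pos_of_pos (by positivity) _
  rcases le_or_gt |t| δ with hcase | hcase
  · -- small t
    have b1 : |max t 0 ^ k| ≤ δ ^ k := by
      rw [abs_pow]
      apply pow_le_pow_left₀ (abs_nonneg _) _ k
      rw [abs_le]
      constructor
      · linarith [le_max_right t 0, hδ]
      · exact le_trans (max_le (le_trans (le_abs_self t) hcase) hδ.le) le_rfl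
    have b2 : |ρ (α * t) / α ^ k| ≤ C * (2 * δ) ^ k := by
      rw [abs_div, abs_of_pos hαk, div_le_iff₀ hαk]
      calc |ρ (α * t)| ≤ C * (1 + |α * t|) ^ k := hgrowth _
        _ = C * (1 + α * |t|) ^ k := by rw [abs_mul, abs_of_pos hα0]
        _ ≤ C * (α * δ + α * δ) ^ k := by
            apply mul_le_mul_of_nonneg_left _ hC.le
            apply pow_le_pow_left₀ (by positivity)
            have : (1:ℝ) ≤ α * δ := hδα
            have : α * |t| ≤ α * δ := mul_le_mul_of_nonneg_left hcase hα0.le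
            linarith
        _ = C * (2 * δ) ^ k * α ^ k := by
            rw [show α * δ + α * δ = (2 * δ) * α by ring, mul_pow]; ring
    calc |max t 0 ^ k - ρ (α * t) / α ^ k| ≤ |max t 0 ^ k| + |ρ (α * t) / α ^ k| := abs_sub _ _
      _ ≤ δ ^ k + C * (2 * δ) ^ k := add_le_add b1 b2
      _ ≤ (1 + 2^k * C) * δ^k := le_of_eq (by rw [mul_pow]; ring)
      _ ≤ _ := le_add_of_nonneg_right (by positivity)
  · -- |t| > δ
    have hbase : (α * δ) ^ a ≤ (α * |t|) ^ a :=
      Real.rpow_le_rpow (by positivity) (mul_le_mul_of_nonneg_left hcase.le hα0.le) ha.le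
    have hmono : (α * |t|) ^ (-a) ≤ (α * δ) ^ (-a) := by
      rw [Real.rpow_neg (by positivity), Real.rpow_neg (by positivity)]
      exact inv_anti₀ (Real.rpow_pos_of_pos (by positivity) _) hbase
    have htk : |t| ^ k ≤ R ^ k := pow_le_pow_left₀ (abs_nonneg t) ht k
    rcases lt_or_ge t 0 with htneg | htpos
    · -- t < 0
      have hαt : α * t < 0 := mul_neg_of_pos_of_neg hα0 htneg
      have habs : |α * t| = α * |t| := by rw [abs_mul, abs_of_pos hα0]
      have e : |max t 0 ^ k - ρ (α * t) / α ^ k| = |ρ (α * t)| / α ^ k := by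
        rw [max_eq_right htneg.le, zero_pow (by omega), zero_sub, abs_neg, abs_div,
          abs_of_pos hαk]
      have ht0' : (0:ℝ) < |t| := abs_pos.mpr (ne_of_lt htneg)
      have e2 : |ρ (α * t)| / α ^ k = |ρ (α * t) / (α * t) ^ k| * |t| ^ k := by
        rw [abs_div, abs_pow, habs, mul_pow]
        field_simp
      rw [e, e2]
      calc |ρ (α * t) / (α * t) ^ k| * |t| ^ k ≤ (C * |α * t| ^ (-a)) * R ^ k := by
            apply mul_le_mul (hneg _ hαt) htk (by positivity)
            positivity
        _ ≤ (C * (α * δ) ^ (-a)) * R ^ k := by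
            apply mul_le_mul_of_nonneg_right _ (by positivity)
            rw [habs]
            exact mul_le_mul_of_nonneg_left hmono hC.le
        _ = C * R^k * (α * δ) ^ (-a) := by ring
        _ ≤ _ := le_add_of_nonneg_left (by positivity)
    · -- t ≥ 0, in fact t ≥ δ > 0
      have htδ : δ < t := by rwa [abs_of_nonneg htpos] at hcase
      have ht0 : 0 < t := lt_trans hδ htδ
      have hαt : 0 < α * t := by positivity
      have e : max t 0 ^ k - ρ (α * t) / α ^ k = (1 - ρ (α * t) / (α * t) ^ k) * t ^ k := by
        rw [max_eq_left htpos, mul_pow]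
        have hne : t ^ k ≠ 0 := by positivity
        field_simp
      rw [e, abs_mul, abs_pow, abs_of_pos ht0]
      have h1 : |1 - ρ (α * t) / (α * t) ^ k| ≤ C * (α * t) ^ (-a) := by
        rw [abs_sub_comm]; exact hpos _ hαt
      calc |1 - ρ (α * t) / (α * t) ^ k| * t ^ k ≤ (C * (α * t) ^ (-a)) * R ^ k := by
            apply mul_le_mul h1 _ (by positivity) (by positivity)
            calc t ^ k ≤ |t| ^ k := by rw [abs_of_pos ht0]
              _ ≤ R ^ k := htk
        _ ≤ (C * (α * δ) ^ (-a)) * R ^ k := by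
            apply mul_le_mul_of_nonneg_right _ (by positivity)
            apply mul_le_mul_of_nonneg_left _ hC.le
            calc (α * t) ^ (-a) = (α * |t|) ^ (-a) := by rw [abs_of_pos ht0]
              _ ≤ (α * δ) ^ (-a) := hmono
        _ = C * R^k * (α * δ) ^ (-a) := by ring
        _ ≤ _ := le_add_of_nonneg_left (by positivity)



noncomputable def twoNet (k : ℕ) (α hstep bias : ℝ) (w : Fin k → ℝ) : NeuralNet 1 2 where
  width := fun ℓ => if ℓ = 1 then k else 1
  width_zero := rfl
  width_last := rfl
  A := fun ℓ => match ℓ with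
    | 0 => fun _ _ => α
    | 1 => fun _ j => w j
    | _+2 => fun _ _ => 0
  b := fun ℓ => match ℓ with
    | 0 => fun j => α * (j : ℕ) * hstep
    | 1 => fun _ => bias
    | _+2 => fun _ => 0

lemma twoNet_realize (k : ℕ) (α hstep bias : ℝ) (w : Fin k → ℝ) (ρ : ℝ → ℝ) (x : ℝ) :
    (twoNet k α hstep bias w).realize ρ (fun _ => x)
      = (∑ j : Fin k, w j * ρ (α * (x + (j:ℕ) * hstep))) + bias := by
  simp [NeuralNet.realize, NeuralNet.hidden, twoNet, Fin.sum_univ_one, mul_add, mul_comm, mul_assoc]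
  erw [Finset.card_univ, Fintype.card_fin]
  simp
  refine Finset.sum_congr rfl fun j _ => ?_
  have e : α * x + hstep * (α * ((j:ℕ):ℝ)) = α * x + α * (hstep * ((j:ℕ):ℝ)) := by ring
  rw [e]

lemma twoNet_conn (k : ℕ) (α hstep bias : ℝ) (w : Fin k → ℝ) :
    (twoNet k α hstep bias w).conn ≤ 3 * k + 1 := by
  unfold NeuralNet.conn
  rw [Finset.sum_range_succ, Finset.sum_range_succ, Finset.sum_range_zero, zero_add]
  apply le_trans (Nat.add_le_add
    (Nat.add_le_add (Finset.card_filter_le _ _) (Finset.card_filter_le _ _))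
    (Nat.add_le_add (Finset.card_filter_le _ _) (Finset.card_filter_le _ _)))
  simp only [Finset.card_univ, Fintype.card_prod, Fintype.card_fin]
  simp [twoNet]
  omega

lemma twoNet_weights (k : ℕ) (α hstep bias : ℝ) (w : Fin k → ℝ) (B : ℝ)
    (h1 : |α| ≤ B) (h2 : ∀ j : Fin k, |α * ((j:ℕ):ℝ) * hstep| ≤ B)
    (h3 : ∀ j : Fin k, |w j| ≤ B) (h4 : |bias| ≤ B) :
    (twoNet k α hstep bias w).weightsBdd B := by
  intro ℓ hℓ
  interval_cases ℓ
  · exact ⟨fun i j => h1, fun i => h2 i⟩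
  · exact ⟨fun i j => h3 j, fun i => h4⟩

end Aux

set_option maxHeartbeats 1000000 in
/-- Approximation of `x_+` on `[-D,D]` by a two-layer network with
connectivity at most `3(k+1)`, with weights bounded by `A·ε^{-n}` for sufficiently small
`ε`, where the positive integer `n` depends only on `k` and `a`. -/
theorem approx_relu
    (k : ℕ) (a b C : ℝ) (ρ : ℝ → ℝ) (hk : 1 ≤ k)
    (ha : 0 < a) (hb : 0 < b) (hC : 0 < C)
    (hρ : StronglySigmoidal ρ k a b C) :
    ∃ n : ℕ, 0 < n ∧ ∀ D : ℝ, 0 < D → ∃ A : ℝ, 0 < A ∧ ∃ ε₀ : ℝ, 0 < ε₀ ∧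
      ∀ ε : ℝ, 0 < ε → ε < ε₀ →
        ∃ Ψ : NeuralNet 1 2, Ψ.conn ≤ 3 * (k + 1) ∧
          Ψ.weightsBdd (A * (ε ^ n)⁻¹) ∧
          ∀ x : ℝ, |x| ≤ D →
            |max x 0 - Ψ.realize ρ fun _ => x| ≤ ε := by
  classical
  obtain ⟨⟨hcont, _h1, _h2, hgrowth⟩, hdiff, hneg, hpos, _hderiv⟩ := hρ
  have hk1 : k - 1 + 1 = k := Nat.succ_pred_eq_of_pos hk
  have hkR : (1:ℝ) ≤ (k:ℝ) := by exact_mod_cast hk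
  have hfac1 : (1:ℝ) ≤ (k.factorial : ℝ) := by
    exact_mod_cast Nat.one_le_iff_ne_zero.mpr (Nat.factorial_pos k).ne'
  refine ⟨k + ⌈(k:ℝ)/a⌉₊ + 1, Nat.succ_pos _, ?_⟩
  intro D hD
  set m : ℕ := k + ⌈(k:ℝ)/a⌉₊ with hm
  set K₁ : ℝ := 2^k * (k:ℝ)^k / (k.factorial:ℝ) + 1 with hK₁def
  have hK₁ : 1 ≤ K₁ := le_add_of_nonneg_left (by positivity)
  have hK₁0 : 0 < K₁ := lt_of_lt_of_le one_pos hK₁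
  set M : ℝ := 2^k * (2*K₁)^(k-1) with hMdef
  have hM : 0 < M := by positivity
  set c₇ : ℝ := 2*M*(1+2^k*C) + 1 with hc₇def
  have hc₇ : 1 ≤ c₇ := le_add_of_nonneg_left (by positivity)
  have hc₇0 : 0 < c₇ := lt_of_lt_of_le one_pos hc₇
  set R : ℝ := D + k with hRdef
  have hR : 0 < R := by positivity
  set Q : ℝ := 2*M*C*R^k with hQdef
  have hQ : 0 < Q := by positivity
  set T : ℝ := (1+Q) ^ (1/a) with hTdef
  have hT1 : 1 ≤ T := by
    rw [hTdef]
    calc (1:ℝ) = (1+Q)^(0:ℝ) := (Real.rpow_zero _).symm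
      _ ≤ (1+Q)^(1/a) := Real.rpow_le_rpow_of_exponent_le (by linarith) (by positivity)
  set A₀ : ℝ := c₇ * T with hA₀def
  have hA₀1 : 1 ≤ A₀ := by nlinarith
  refine ⟨(k:ℝ)*A₀ + 2^k*(2*K₁)^k + 1, by positivity, 1, one_pos, ?_⟩
  intro ε hε0 hε1'
  have hε1 : ε ≤ 1 := le_of_lt hε1'
  set hst : ℝ := ε / (2*K₁) with hhdef
  have hh0 : 0 < hst := by positivity
  have hh1 : hst ≤ 1 := by rw [hhdef, div_le_one (by positivity)]; linarith
  have hK₁h : K₁ * hst = ε/2 := by rw [hhdef]; field_simp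
  set α : ℝ := A₀ / ε^(m+1) with hαdef
  have hεn0 : 0 < ε^(m+1) := by positivity
  have hεn1 : ε^(m+1) ≤ 1 := pow_le_one₀ hε0.le hε1
  have hα1 : 1 ≤ α := by rw [hαdef, le_div_iff₀ hεn0]; linarith [hεn1, hA₀1]
  have hα0 : 0 < α := lt_of_lt_of_le one_pos hα1
  set δ : ℝ := ε / c₇ with hδdef
  have hδ0 : 0 < δ := by positivity
  have hαδeq : α * δ = T * (ε^m)⁻¹ := by
    rw [hαdef, hδdef, hA₀def, pow_succ]
    field_simp
  have hεm1 : ε^m ≤ 1 := pow_le_one₀ hε0.le hε1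
  have hεm0 : 0 < ε^m := by positivity
  have hαδ1 : 1 ≤ α * δ := by
    rw [hαδeq]
    have h1 : 1 ≤ (ε^m)⁻¹ := (one_le_inv₀ hεm0).mpr hεm1
    calc (1:ℝ) = 1 * 1 := (one_mul 1).symm
      _ ≤ T * (ε^m)⁻¹ := mul_le_mul hT1 h1 zero_le_one (by linarith)
  have hka : (k:ℝ) ≤ (m:ℝ) * a := by
    have h1 : ((k:ℝ)/a) ≤ (⌈(k:ℝ)/a⌉₊ : ℝ) := Nat.le_ceil _
    have h2 : (⌈(k:ℝ)/a⌉₊ : ℝ) ≤ (m:ℝ) := by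
      rw [hm]; exact_mod_cast Nat.le_add_left _ k
    calc (k:ℝ) = ((k:ℝ)/a) * a := (div_mul_cancel₀ _ ha.ne').symm
      _ ≤ (⌈(k:ℝ)/a⌉₊:ℝ) * a := mul_le_mul_of_nonneg_right h1 ha.le
      _ ≤ (m:ℝ) * a := mul_le_mul_of_nonneg_right h2 ha.le
  have hpowm : (ε^m : ℝ) ^ a ≤ ε ^ k := by
    rw [← Real.rpow_natCast ε m, ← Real.rpow_natCast ε k, ← Real.rpow_mul hε0.le]
    exact Real.rpow_le_rpow_of_exponent_ge hε0 hε1 hka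
  have hεk0 : (0:ℝ) < ε^k := by positivity
  have hαδa : (1+Q) * (ε^k)⁻¹ ≤ (α*δ) ^ a := by
    rw [hαδeq, Real.mul_rpow (by positivity) (by positivity), Real.inv_rpow (by positivity)]
    have e1 : T ^ a = 1 + Q := by
      rw [hTdef, ← Real.rpow_mul (by positivity : (0:ℝ) ≤ 1+Q), one_div_mul_cancel ha.ne',
        Real.rpow_one]
    rw [e1]
    apply mul_le_mul_of_nonneg_left _ (by positivity)
    exact inv_anti₀ (by positivity) hpowm
  have htail : C * R^k * (α*δ) ^ (-a) ≤ ε^k / (2*M) := by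
    rw [Real.rpow_neg (by positivity)]
    have h2 : ((α*δ)^a)⁻¹ ≤ ((1+Q) * (ε^k)⁻¹)⁻¹ :=
      inv_anti₀ (by positivity) hαδa
    have h3 : ((1+Q) * (ε^k)⁻¹)⁻¹ = ε^k/(1+Q) := by
      field_simp
    calc C*R^k * ((α*δ)^a)⁻¹ ≤ C*R^k * (ε^k/(1+Q)) := by
          rw [← h3]; exact mul_le_mul_of_nonneg_left h2 (by positivity)
      _ ≤ C*R^k * (ε^k/Q) := by
          apply mul_le_mul_of_nonneg_left _ (by positivity)
          exact div_le_div_of_nonneg_left hεk0.le hQ (by linarith)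
      _ = ε^k/(2*M) := by
          rw [hQdef]
          field_simp
  have hsmall : (1+2^k*C) * δ^k ≤ ε^k/(2*M) := by
    have h1 : δ^k ≤ ε^k/c₇ := by
      rw [hδdef, div_pow]
      exact div_le_div_of_nonneg_left (by positivity) hc₇0 (le_self_pow₀ hc₇ (by omega))
    calc (1+2^k*C) * δ^k ≤ (1+2^k*C) * (ε^k/c₇) :=
          mul_le_mul_of_nonneg_left h1 (by positivity)
      _ ≤ ε^k/(2*M) := by
          rw [mul_div_assoc', div_le_div_iff₀ hc₇0 (by positivity)]
          calc (1+2^k*C) * ε^k * (2*M) = ε^k * (2*M*(1+2^k*C)) := by ring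
            _ ≤ ε^k * c₇ := by
                apply mul_le_mul_of_nonneg_left _ hεk0.le
                rw [hc₇def]; linarith
  set Em : ℝ := (1 + 2^k*C) * δ^k + C * R^k * (α*δ) ^ (-a) with hEmdef
  have hEm : Em ≤ ε^k/M := by
    rw [hEmdef]
    calc (1 + 2^k*C) * δ^k + C * R^k * (α*δ) ^ (-a) ≤ ε^k/(2*M) + ε^k/(2*M) :=
          add_le_add hsmall htail
      _ = ε^k/M := by field_simp; ring
  -- network data
  obtain ⟨c, hc⟩ := key_identity hst (k-1)
  rw [hk1] at hc
  set Dk : ℝ := (k.factorial:ℝ) * hst^(k-1) with hDkdef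
  have hDk0 : 0 < Dk := by positivity
  have hkey : 2^k * ((k:ℝ)*hst)^k ≤ K₁ * hst * Dk := by
    rw [hDkdef, mul_pow]
    have e1 : hst^k = hst^(k-1) * hst := by rw [← pow_succ, hk1]
    rw [e1]
    have e2 : K₁ * (k.factorial:ℝ) = 2^k * (k:ℝ)^k + (k.factorial:ℝ) := by
      rw [hK₁def]; field_simp
    calc (2:ℝ)^k * ((k:ℝ)^k * (hst^(k-1) * hst)) = (2^k*(k:ℝ)^k) * (hst^(k-1)*hst) := by ring
      _ ≤ (K₁ * (k.factorial:ℝ)) * (hst^(k-1)*hst) := by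
          apply mul_le_mul_of_nonneg_right _ (by positivity)
          rw [e2]; linarith
      _ = K₁ * hst * ((k.factorial:ℝ) * hst^(k-1)) := by ring
  set wN : ℕ → ℝ := fun j => ((-1:ℝ)^(k-1-j) * (((k-1).choose j):ℝ)) / (Dk * α^k) with hwN
  set bias : ℝ := -(c / Dk) with hbias
  -- bound on sums of plus-powers
  have hNbound : ∀ x : ℝ, x ≤ 0 →
      |∑ j ∈ Finset.range k, (-1:ℝ)^(k-1-j) * (((k-1).choose j):ℝ) * (max (x + (j:ℝ)*hst) 0)^k|
        ≤ 2^(k-1) * ((k:ℝ)*hst)^k := by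
    intro x hx
    calc |∑ j ∈ Finset.range k, (-1:ℝ)^(k-1-j) * (((k-1).choose j):ℝ) * (max (x + (j:ℝ)*hst) 0)^k|
        ≤ ∑ j ∈ Finset.range k, |(-1:ℝ)^(k-1-j) * (((k-1).choose j):ℝ) * (max (x + (j:ℝ)*hst) 0)^k| :=
          Finset.abs_sum_le_sum_abs _ _
      _ ≤ ∑ j ∈ Finset.range k, (((k-1).choose j):ℝ) * ((k:ℝ)*hst)^k := by
          apply Finset.sum_le_sum
          intro j hj
          have hj' : (j:ℝ) ≤ (k:ℝ) := by
            exact_mod_cast Nat.le_of_lt (Finset.mem_range.mp hj)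
          have hmax : max (x + (j:ℝ)*hst) 0 ≤ (k:ℝ)*hst := by
            apply max_le _ (by positivity)
            have h7 : (j:ℝ)*hst ≤ (k:ℝ)*hst := mul_le_mul_of_nonneg_right hj' hh0.le
            linarith
          simp only [abs_mul, abs_pow, abs_neg, abs_one, one_pow, one_mul, Nat.abs_cast]
          apply mul_le_mul_of_nonneg_left _ (by positivity)
          rw [abs_of_nonneg (le_max_right _ _)]
          exact pow_le_pow_left₀ (le_max_right _ _) hmax k
      _ = 2^(k-1) * ((k:ℝ)*hst)^k := by
          rw [← Finset.sum_mul]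
          congr 1
          rw [show (∑ j ∈ Finset.range k, (((k-1).choose j):ℝ))
              = (((∑ j ∈ Finset.range k, (k-1).choose j : ℕ)):ℝ) by push_cast; rfl]
          rw [show Finset.range k = Finset.range ((k-1)+1) by rw [hk1]]
          rw [Nat.sum_range_choose]
          push_cast
          rfl
  have hcval : c = ∑ j ∈ Finset.range k,
      (-1:ℝ)^(k-1-j) * (((k-1).choose j):ℝ) * (max ((0:ℝ) + (j:ℝ)*hst) 0)^k := by
    have h0 := hc 0
    rw [mul_zero, zero_add] at h0
    rw [← h0]
    apply Finset.sum_congr rfl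
    intro j hj
    congr 2
    rw [max_eq_left (by positivity)]
  have hcbound : |c| ≤ 2^(k-1) * ((k:ℝ)*hst)^k := by
    rw [hcval]
    exact hNbound 0 le_rfl
  -- the network
  refine ⟨twoNet k α hst bias (fun j : Fin k => wN (j:ℕ)), ?_, ?_, ?_⟩
  · exact le_trans (twoNet_conn _ _ _ _ _) (by omega)
  · -- weights bound
    apply twoNet_weights
    · rw [abs_of_pos hα0, hαdef]
      rw [div_eq_mul_inv]
      have hp1 : (0:ℝ) < 2^k*(2*K₁)^k := by positivity
      have hp2 : A₀ ≤ (k:ℝ)*A₀ := le_mul_of_one_le_left (by linarith) hkR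
      have : A₀ ≤ (k:ℝ)*A₀ + 2^k*(2*K₁)^k + 1 := by linarith
      exact mul_le_mul_of_nonneg_right this (by positivity)
    · intro j
      have hj' : (j:ℝ) ≤ (k:ℝ) := by exact_mod_cast Nat.le_of_lt j.isLt
      have h1 : |α * ((j:ℕ):ℝ) * hst| = α * ((j:ℕ):ℝ) * hst := abs_of_nonneg (by positivity)
      rw [h1]
      calc α * ((j:ℕ):ℝ) * hst ≤ α * (k:ℝ) * 1 := by
            apply mul_le_mul (mul_le_mul_of_nonneg_left hj' hα0.le) hh1 hh0.le (by positivity)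
        _ = ((k:ℝ)*A₀) * (ε^(m+1))⁻¹ := by rw [hαdef]; ring
        _ ≤ ((k:ℝ)*A₀ + 2^k*(2*K₁)^k + 1) * (ε^(m+1))⁻¹ := by
            apply mul_le_mul_of_nonneg_right _ (by positivity)
            have hp1 : (0:ℝ) < 2^k*(2*K₁)^k := by positivity
            linarith
    · intro j
      have hchoose : (((k-1).choose (j:ℕ)):ℝ) ≤ 2^(k-1) := by
        have h1 : (k-1).choose (j:ℕ) ≤ 2^(k-1) := by
          calc (k-1).choose (j:ℕ) ≤ ∑ i ∈ Finset.range ((k-1)+1), (k-1).choose i := by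
                apply Finset.single_le_sum (f := fun i => (k-1).choose i) (fun i _ => Nat.zero_le _)
                rw [Finset.mem_range, hk1]; exact j.isLt
            _ = 2^(k-1) := Nat.sum_range_choose _
        exact_mod_cast h1
      have hwabs : |wN (j:ℕ)| = (((k-1).choose (j:ℕ)):ℝ) / (Dk * α^k) := by
        rw [hwN]
        rw [abs_div, abs_mul, abs_pow, abs_neg, abs_one, one_pow, one_mul, Nat.abs_cast,
          abs_of_pos (by positivity : (0:ℝ) < Dk * α^k)]
      rw [hwabs]
      have hαk1 : (1:ℝ) ≤ α^k := one_le_pow₀ hα1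
      have hden : hst^(k-1) ≤ Dk * α^k := by
        rw [hDkdef]
        calc hst^(k-1) = 1 * hst^(k-1) * 1 := by ring
          _ ≤ (k.factorial:ℝ) * hst^(k-1) * α^k := by
              apply mul_le_mul (mul_le_mul hfac1 le_rfl (by positivity) (by linarith))
                hαk1 zero_le_one (by positivity)
      calc (((k-1).choose (j:ℕ)):ℝ) / (Dk * α^k) ≤ 2^(k-1) / hst^(k-1) := by
            apply div_le_div₀ (by positivity) hchoose (by positivity) hden
        _ = 2^(k-1) * (2*K₁)^(k-1) * (ε^(k-1))⁻¹ := by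
            rw [hhdef, div_pow]
            field_simp
        _ ≤ (2^k*(2*K₁)^k) * (ε^(m+1))⁻¹ := by
            apply mul_le_mul
            · apply mul_le_mul (pow_le_pow_right₀ one_le_two (by omega))
                (pow_le_pow_right₀ (by linarith) (by omega)) (by positivity) (by positivity)
            · apply inv_anti₀ hεn0
              exact pow_le_pow_of_le_one hε0.le hε1 (by omega)
            · positivity
            · positivity
        _ ≤ ((k:ℝ)*A₀ + 2^k*(2*K₁)^k + 1) * (ε^(m+1))⁻¹ := by
            apply mul_le_mul_of_nonneg_right _ (by positivity)
            have h9 : (1:ℝ) ≤ (k:ℝ)*A₀ := le_trans (le_of_eq (one_mul 1).symm) (mul_le_mul hkR hA₀1 zero_le_one (by linarith))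
            linarith
    · -- bias
      have h1 : |bias| = |c| / Dk := by
        rw [hbias, abs_neg, abs_div, abs_of_pos hDk0]
      rw [h1]
      have h2 : |c| / Dk ≤ K₁ * hst := by
        rw [div_le_iff₀ hDk0]
        calc |c| ≤ 2^(k-1) * ((k:ℝ)*hst)^k := hcbound
          _ ≤ 2^k * ((k:ℝ)*hst)^k := by
              apply mul_le_mul_of_nonneg_right (pow_le_pow_right₀ one_le_two (by omega))
                (by positivity)
          _ ≤ K₁ * hst * Dk := hkey
      calc |c| / Dk ≤ K₁ * hst := h2
        _ = ε/2 := hK₁h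
        _ ≤ 1 := by linarith
        _ ≤ ((k:ℝ)*A₀ + 2^k*(2*K₁)^k + 1) * (ε^(m+1))⁻¹ := by
            have g1 : (1:ℝ) ≤ ((k:ℝ)*A₀ + 2^k*(2*K₁)^k + 1) := by
              have hp1 : (0:ℝ) < 2^k*(2*K₁)^k := by positivity
              have h9 : (1:ℝ) ≤ (k:ℝ)*A₀ := le_trans (le_of_eq (one_mul 1).symm) (mul_le_mul hkR hA₀1 zero_le_one (by linarith))
              linarith
            have g2 : (1:ℝ) ≤ (ε^(m+1))⁻¹ := (one_le_inv₀ hεn0).mpr hεn1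
            calc (1:ℝ) = 1 * 1 := (one_mul 1).symm
              _ ≤ ((k:ℝ)*A₀ + 2^k*(2*K₁)^k + 1) * (ε^(m+1))⁻¹ :=
                  mul_le_mul g1 g2 zero_le_one (by linarith)
  · -- approximation estimate
    intro x hx
    rw [twoNet_realize]
    have hS2 : (∑ j : Fin k, (fun j : Fin k => wN (j:ℕ)) j * ρ (α * (x + ((j:ℕ):ℝ) * hst)))
        = (∑ j ∈ Finset.range k,
            (-1:ℝ)^(k-1-j) * (((k-1).choose j):ℝ) * (ρ (α*(x+(j:ℝ)*hst))/α^k)) / Dk := by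
      rw [Fin.sum_univ_eq_sum_range (fun jn => wN jn * ρ (α * (x + (jn:ℝ) * hst))) k]
      rw [Finset.sum_div]
      apply Finset.sum_congr rfl
      intro j _
      simp only [hwN]
      ring
    rw [hS2, hbias]
    set S1 : ℝ := ∑ j ∈ Finset.range k,
      (-1:ℝ)^(k-1-j) * (((k-1).choose j):ℝ) * (max (x + (j:ℝ)*hst) 0)^k with hS1def
    set S2 : ℝ := ∑ j ∈ Finset.range k,
      (-1:ℝ)^(k-1-j) * (((k-1).choose j):ℝ) * (ρ (α*(x+(j:ℝ)*hst))/α^k) with hS2def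
    have hsplit : max x 0 - (S2 / Dk + -(c / Dk))
        = (max x 0 - (S1 - c)/Dk) + (S1 - S2)/Dk := by ring
    rw [hsplit]
    have stepA : |max x 0 - (S1 - c)/Dk| ≤ ε/2 := by
      rcases le_or_gt 0 x with hx0 | hx0
      · have hS1v : S1 = Dk * x + c := by
          rw [hS1def]
          have e : ∀ j ∈ Finset.range k,
              (-1:ℝ)^(k-1-j) * (((k-1).choose j):ℝ) * (max (x + (j:ℝ)*hst) 0)^k
                = (-1:ℝ)^(k-1-j) * (((k-1).choose j):ℝ) * (x + (j:ℝ)*hst)^k := by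
            intro j _
            congr 2
            rw [max_eq_left (by positivity)]
          rw [Finset.sum_congr rfl e, hc x, hDkdef]
        rw [hS1v]
        have e2 : (Dk * x + c - c)/Dk = x := by field_simp; ring
        rw [e2, max_eq_left hx0, sub_self, abs_zero]
        positivity
      · rw [max_eq_right hx0.le, zero_sub, abs_neg, abs_div, abs_of_pos hDk0]
        have h1 : |S1 - c| ≤ 2^k * ((k:ℝ)*hst)^k := by
          calc |S1 - c| ≤ |S1| + |c| := abs_sub _ _
            _ ≤ 2^(k-1) * ((k:ℝ)*hst)^k + 2^(k-1) * ((k:ℝ)*hst)^k :=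
                add_le_add (hNbound x hx0.le) hcbound
            _ = 2^k * ((k:ℝ)*hst)^k := by
                rw [show (2:ℝ)^k = 2^(k-1)*2 by rw [← pow_succ, hk1]]
                ring
        rw [div_le_iff₀ hDk0, ← hK₁h]
        calc |S1 - c| ≤ 2^k * ((k:ℝ)*hst)^k := h1
          _ ≤ K₁ * hst * Dk := hkey
    have stepB : |(S1 - S2)/Dk| ≤ ε/2 := by
      have hdiffsum : S1 - S2 = ∑ j ∈ Finset.range k,
          (-1:ℝ)^(k-1-j) * (((k-1).choose j):ℝ)
            * ((max (x + (j:ℝ)*hst) 0)^k - ρ (α*(x+(j:ℝ)*hst))/α^k) := by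
        rw [hS1def, hS2def, ← Finset.sum_sub_distrib]
        apply Finset.sum_congr rfl
        intro j _
        ring
      have hsb : |S1 - S2| ≤ 2^(k-1) * Em := by
        rw [hdiffsum]
        calc |∑ j ∈ Finset.range k, (-1:ℝ)^(k-1-j) * (((k-1).choose j):ℝ)
                * ((max (x + (j:ℝ)*hst) 0)^k - ρ (α*(x+(j:ℝ)*hst))/α^k)|
            ≤ ∑ j ∈ Finset.range k, |(-1:ℝ)^(k-1-j) * (((k-1).choose j):ℝ)
                * ((max (x + (j:ℝ)*hst) 0)^k - ρ (α*(x+(j:ℝ)*hst))/α^k)| :=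
              Finset.abs_sum_le_sum_abs _ _
          _ ≤ ∑ j ∈ Finset.range k, (((k-1).choose j):ℝ) * Em := by
              apply Finset.sum_le_sum
              intro j hj
              simp only [abs_mul, abs_pow, abs_neg, abs_one, one_pow, one_mul, Nat.abs_cast]
              apply mul_le_mul_of_nonneg_left _ (by positivity)
              have hj' : (j:ℝ) ≤ (k:ℝ) := by
                exact_mod_cast Nat.le_of_lt (Finset.mem_range.mp hj)
              have htR : |x + (j:ℝ)*hst| ≤ R := by
                calc |x + (j:ℝ)*hst| ≤ |x| + |(j:ℝ)*hst| := abs_add_le _ _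
                  _ ≤ D + (k:ℝ) := by
                      apply add_le_add hx
                      rw [abs_of_nonneg (by positivity)]
                      have h7 : (j:ℝ)*hst ≤ (k:ℝ)*1 := mul_le_mul hj' hh1 hh0.le (by positivity)
                      linarith
                  _ = R := by rw [hRdef]
              rw [hEmdef]
              exact approx_err k a C ρ hk ha hC hgrowth hneg hpos α δ R (x + (j:ℝ)*hst)
                hα1 hδ0 hαδ1 htR
          _ = 2^(k-1) * Em := by
              rw [← Finset.sum_mul]
              congr 1
              rw [show (∑ j ∈ Finset.range k, (((k-1).choose j):ℝ))
                  = (((∑ j ∈ Finset.range k, (k-1).choose j : ℕ)):ℝ) by push_cast; rfl]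
              rw [show Finset.range k = Finset.range ((k-1)+1) by rw [hk1]]
              rw [Nat.sum_range_choose]
              push_cast
              rfl
      rw [abs_div, abs_of_pos hDk0, div_le_iff₀ hDk0]
      calc |S1 - S2| ≤ 2^(k-1) * Em := hsb
        _ ≤ 2^(k-1) * (ε^k/M) := mul_le_mul_of_nonneg_left hEm (by positivity)
        _ ≤ ε/2 * Dk := by
            rw [hDkdef, hMdef, hhdef, div_pow]
            have e2 : (2:ℝ)^k = 2^(k-1)*2 := by rw [← pow_succ, hk1]
            have eε : ε^k = ε^(k-1)*ε := by rw [← pow_succ, hk1]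
            have base : (2:ℝ)^(k-1) * (ε^k/(2^k*(2*K₁)^(k-1)))
                = ε/2 * (ε^(k-1)/(2*K₁)^(k-1)) := by
              rw [e2, eε]
              field_simp
            rw [base]
            apply mul_le_mul_of_nonneg_left _ (by positivity)
            exact le_mul_of_one_le_left (by positivity) hfac1
    calc |(max x 0 - (S1 - c)/Dk) + (S1 - S2)/Dk|
        ≤ |max x 0 - (S1 - c)/Dk| + |(S1 - S2)/Dk| := abs_add_le _ _
      _ ≤ ε/2 + ε/2 := add_le_add stepA stepB
      _ = ε := by ring
end
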